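/- arXiv:1810.09921 — 5 statements merged into one kernel-verified Lean document; each statement's English description precedes it below -/
import Mathlib

section
/- Fix an integer r ≥ 2 and a probability distribution μ = (μ_1, …, μ_r) with μ_i > 0 for all i, and set μ̃ = Σ_{i=1}^{r−1} μ_i = 1 − μ_r. For every n ≥ 2 and every admissible vector (K_1, …, K_r) with K_1 = 1 and K_r large enough that K_r ≥ ⌈4·((1/2)^{K_r−1}/μ̃) + 1⌉, the probability of connectivity satisfies P(n; μ, K) ≥ 1 − (μ̃²/(1 − μ̃)) · Ψ(n, μ, K), where Ψ(n, μ, K) = max{ exp(−2(1−μ̃)((K_r−1)/4 − (1/2)^{K_r−1}/μ̃)), exp(−(1−μ̃)(n/2)(1 − e^{−1} − (1/2)^{K_r−1}/μ̃)) }. -/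
open Finset Filter

noncomputable section

/-- A configuration assigns to each vertex a class in `Fin r` and a selection set. -/
abbrev Config (n r : ℕ) := Fin n → Fin r × Finset (Fin n)

/-- Probability weight of a configuration: each vertex `v` independently has class `i`
with probability `μ i`, and given class `i`, its selection set is a uniformly random
`K i`-subset of the other vertices. -/
noncomputable def wt {r : ℕ} (n : ℕ) (μ : Fin r → ℝ) (K : Fin r → ℕ)
    (ω : Config n r) : ℝ :=
  ∏ v : Fin n,
    if (ω v).2.card = K (ω v).1 ∧ v ∉ (ω v).2 then
      μ (ω v).1 / ((n - 1).choose (K (ω v).1) : ℝ)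
    else 0

/-- Probability of an event in the inhomogeneous random K-out graph model. -/
noncomputable def Pr {r : ℕ} (n : ℕ) (μ : Fin r → ℝ) (K : Fin r → ℕ)
    (E : Set (Config n r)) : ℝ :=
  ∑ ω : Config n r, E.indicator (wt n μ K) ω

/-- Expectation of a real-valued random variable in the model. -/
noncomputable def Ex {r : ℕ} (n : ℕ) (μ : Fin r → ℝ) (K : Fin r → ℕ)
    (f : Config n r → ℝ) : ℝ :=
  ∑ ω : Config n r, f ω * wt n μ K ω

/-- The undirected graph induced by a configuration: `u ~ v` iff at least one of
them selected the other. -/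
def graphOf {n r : ℕ} (ω : Config n r) : SimpleGraph (Fin n) where
  Adj u v := u ≠ v ∧ (u ∈ (ω v).2 ∨ v ∈ (ω u).2)
  symm := ⟨fun _ _ h => ⟨h.1.symm, h.2.symm⟩⟩
  loopless := ⟨fun _ h => h.1 rfl⟩

/-- Probability that the inhomogeneous random K-out graph is connected. -/
noncomputable def Pconn {r : ℕ} (n : ℕ) (μ : Fin r → ℝ) (K : Fin r → ℕ) : ℝ :=
  Pr n μ K {ω | (graphOf ω).Connected}

/-- The event `U_{ij}`: vertices `i` and `j` both have class `c`, each selected exactly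
the other, and no other vertex selected either of them. -/
def Uevent {n r : ℕ} (c : Fin r) (i j : Fin n) : Set (Config n r) :=
  {ω | (ω i).1 = c ∧ (ω j).1 = c ∧ (ω i).2 = {j} ∧ (ω j).2 = {i} ∧
    ∀ l : Fin n, l ≠ i → l ≠ j → i ∉ (ω l).2 ∧ j ∉ (ω l).2}

/-- `Y`: the number of isolated components consisting of two class-`c` vertices. -/
noncomputable def Ycount {n r : ℕ} (c : Fin r) (ω : Config n r) : ℝ :=
  ∑ p : Fin n × Fin n,
    if p.1 < p.2 then (Uevent c p.1 p.2).indicator (fun _ => (1 : ℝ)) ω else 0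

/-- The event `B_{n,ℓ}`: the set of vertices with index `< ℓ` is isolated, i.e. there is
no edge between it and its complement. -/
def Bevent (n r : ℕ) (l : ℕ) : Set (Config n r) :=
  {ω | ∀ u v : Fin n, (u : ℕ) < l → ¬ (v : ℕ) < l → u ∉ (ω v).2 ∧ v ∉ (ω u).2}


set_option maxHeartbeats 1000000

private lemma choose_mul_pow_le (m N : ℕ) (h : m ≤ N) :
    ∀ k, m.choose k * N ^ k ≤ N.choose k * m ^ k := by
  intro k
  induction k with
  | zero => simp
  | succ k ih =>
    rcases le_or_gt m k with hk | hk
    · simp [Nat.choose_eq_zero_of_lt (Nat.lt_succ_of_le hk)]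
    · have h2 : (m - k) * N ≤ (N - k) * m := by
        rw [Nat.sub_mul, Nat.sub_mul]
        have h3 : k * m ≤ k * N := Nat.mul_le_mul_left k h
        rw [mul_comm N m]
        exact Nat.sub_le_sub_left h3 (m * N)
      have key : (m.choose (k+1) * (k+1)) * N ^ (k+1) ≤ (N.choose (k+1) * (k+1)) * m ^ (k+1) := by
        rw [Nat.choose_succ_right_eq, Nat.choose_succ_right_eq, pow_succ, pow_succ]
        calc m.choose k * (m - k) * (N ^ k * N)
            = (m.choose k * N ^ k) * ((m - k) * N) := by ring
          _ ≤ (N.choose k * m ^ k) * ((N - k) * m) := Nat.mul_le_mul ih h2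
          _ = N.choose k * (N - k) * (m ^ k * m) := by ring
      have := key
      rw [mul_comm (m.choose (k+1)) (k+1), mul_comm (N.choose (k+1)) (k+1), mul_assoc, mul_assoc] at this
      exact Nat.le_of_mul_le_mul_left this (Nat.succ_pos k)

private lemma choose_ratio_le (m N k : ℕ) (h : m ≤ N) (hN : 0 < N) :
    (m.choose k : ℝ) / (N.choose k : ℝ) ≤ ((m : ℝ) / N) ^ k := by
  rcases Nat.lt_or_ge N k with hk | hk
  · rw [Nat.choose_eq_zero_of_lt (lt_of_le_of_lt h hk)]
    simp
    positivity
  · have hC : (0 : ℝ) < N.choose k := by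
      exact_mod_cast Nat.choose_pos hk
    rw [div_le_iff₀ hC, div_pow, div_mul_eq_mul_div, le_div_iff₀ (by positivity)]
    calc (m.choose k : ℝ) * N ^ k = ((m.choose k * N ^ k : ℕ) : ℝ) := by push_cast; ring
      _ ≤ ((N.choose k * m ^ k : ℕ) : ℝ) := by exact_mod_cast choose_mul_pow_le m N h k
      _ = (m:ℝ)^k * N.choose k := by push_cast; ring

private lemma sum_if_subset {n : ℕ} (D : Finset (Fin n)) (k : ℕ) (w : ℝ) :
    (∑ T : Finset (Fin n), if T ⊆ D ∧ T.card = k then w else 0)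
      = (D.card.choose k : ℝ) * w := by
  classical
  rw [← Finset.sum_filter]
  have : (Finset.univ.filter (fun T : Finset (Fin n) => T ⊆ D ∧ T.card = k))
      = D.powersetCard k := by
    ext T; simp [Finset.mem_powersetCard]
  rw [this]
  simp [Finset.sum_const, Finset.card_powersetCard, mul_comm]

private lemma sum_wt_prod {n r : ℕ} (g : Fin n → Fin r × Finset (Fin n) → ℝ) :
    (∑ ω : Config n r, ∏ v, g v (ω v)) = ∏ v, ∑ p : Fin r × Finset (Fin n), g v p :=
  (Fintype.prod_sum (fun v p => g v p)).symm

private lemma pr_iso {r : ℕ} (n : ℕ) (μ : Fin r → ℝ) (K : Fin r → ℕ) (S : Finset (Fin n)) :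
    Pr n μ K {ω : Config n r | ∀ v : Fin n, (v ∈ S → (ω v).2 ⊆ S) ∧ (v ∉ S → ∀ u ∈ (ω v).2, u ∉ S)}
    = (∑ c, μ c * (((S.card - 1).choose (K c) : ℝ) / ((n-1).choose (K c) : ℝ))) ^ S.card *
      (∑ c, μ c * (((n - S.card - 1).choose (K c) : ℝ) / ((n-1).choose (K c) : ℝ))) ^ (n - S.card) := by
  classical
  set g : Fin n → Fin r × Finset (Fin n) → ℝ := fun v p =>
    if (v ∈ S → p.2 ⊆ S) ∧ (v ∉ S → ∀ u ∈ p.2, u ∉ S) then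
      (if p.2.card = K p.1 ∧ v ∉ p.2 then μ p.1 / ((n - 1).choose (K p.1) : ℝ) else 0)
    else 0 with hg
  have hstep : Pr n μ K {ω : Config n r | ∀ v : Fin n, (v ∈ S → (ω v).2 ⊆ S) ∧ (v ∉ S → ∀ u ∈ (ω v).2, u ∉ S)}
      = ∑ ω : Config n r, ∏ v, g v (ω v) := by
    unfold Pr
    refine Finset.sum_congr rfl (fun ω _ => ?_)
    rw [Set.indicator_apply]
    by_cases hω : ω ∈ {ω : Config n r | ∀ v : Fin n, (v ∈ S → (ω v).2 ⊆ S) ∧ (v ∉ S → ∀ u ∈ (ω v).2, u ∉ S)}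
    · rw [if_pos hω]
      unfold wt
      refine Finset.prod_congr rfl (fun v _ => ?_)
      rw [hg]
      simp only []
      rw [if_pos (hω v)]
    · rw [if_neg hω]
      have : ∃ v : Fin n, ¬ ((v ∈ S → (ω v).2 ⊆ S) ∧ (v ∉ S → ∀ u ∈ (ω v).2, u ∉ S)) := by
        by_contra hcon
        push_neg at hcon
        exact hω (fun v => hcon v)
      obtain ⟨v0, hv0⟩ := this
      symm
      refine Finset.prod_eq_zero (Finset.mem_univ v0) ?_
      rw [hg]; simp only []; rw [if_neg hv0]
  rw [hstep, sum_wt_prod]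
  have hin : ∀ v : Fin n, v ∈ S → (∑ p : Fin r × Finset (Fin n), g v p)
      = ∑ c, μ c * (((S.card - 1).choose (K c) : ℝ) / ((n-1).choose (K c) : ℝ)) := by
    intro v hv
    rw [Fintype.sum_prod_type]
    refine Finset.sum_congr rfl (fun c _ => ?_)
    have key : ∀ T : Finset (Fin n), g v (c, T)
        = if T ⊆ S.erase v ∧ T.card = K c then μ c / ((n - 1).choose (K c) : ℝ) else 0 := by
      intro T
      rw [hg]
      simp only []
      by_cases h1 : T ⊆ S.erase v ∧ T.card = K c
      · have hTS : T ⊆ S := h1.1.trans (Finset.erase_subset v S)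
        have hvT : v ∉ T := fun hmem => (Finset.mem_erase.1 (h1.1 hmem)).1 rfl
        rw [if_pos h1, if_pos ⟨fun _ => hTS, fun h => absurd hv h⟩, if_pos ⟨h1.2, hvT⟩]
      · rw [if_neg h1]
        split_ifs with h2 h3
        · exact absurd ⟨fun u hu => Finset.mem_erase.2 ⟨fun he => h3.2 (he ▸ hu), h2.1 hv hu⟩, h3.1⟩ h1
        · rfl
        · rfl
    rw [Finset.sum_congr rfl (fun T _ => key T), sum_if_subset]
    rw [Finset.card_erase_of_mem hv]
    ring
  have hout : ∀ v : Fin n, v ∉ S → (∑ p : Fin r × Finset (Fin n), g v p)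
      = ∑ c, μ c * (((n - S.card - 1).choose (K c) : ℝ) / ((n-1).choose (K c) : ℝ)) := by
    intro v hv
    rw [Fintype.sum_prod_type]
    refine Finset.sum_congr rfl (fun c _ => ?_)
    have key : ∀ T : Finset (Fin n), g v (c, T)
        = if T ⊆ Sᶜ.erase v ∧ T.card = K c then μ c / ((n - 1).choose (K c) : ℝ) else 0 := by
      intro T
      rw [hg]
      simp only []
      by_cases h1 : T ⊆ Sᶜ.erase v ∧ T.card = K c
      · have hTS : ∀ u ∈ T, u ∉ S := by
          intro u hu
          have := h1.1 hu
          exact Finset.mem_compl.1 (Finset.mem_of_mem_erase this)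
        have hvT : v ∉ T := fun hmem => (Finset.mem_erase.1 (h1.1 hmem)).1 rfl
        rw [if_pos h1, if_pos ⟨fun h => absurd h hv, fun _ => hTS⟩, if_pos ⟨h1.2, hvT⟩]
      · rw [if_neg h1]
        split_ifs with h2 h3
        · refine absurd ⟨fun u hu => Finset.mem_erase.2 ⟨fun he => h3.2 (he ▸ hu), Finset.mem_compl.2 (h2.2 hv u hu)⟩, h3.1⟩ h1
        · rfl
        · rfl
    rw [Finset.sum_congr rfl (fun T _ => key T), sum_if_subset]
    have hvc : v ∈ Sᶜ := Finset.mem_compl.2 hv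
    rw [Finset.card_erase_of_mem hvc, Finset.card_compl, Fintype.card_fin]
    ring
  have : ∀ v : Fin n, (∑ p : Fin r × Finset (Fin n), g v p)
      = if v ∈ S then (∑ c, μ c * (((S.card - 1).choose (K c) : ℝ) / ((n-1).choose (K c) : ℝ)))
        else (∑ c, μ c * (((n - S.card - 1).choose (K c) : ℝ) / ((n-1).choose (K c) : ℝ))) := by
    intro v
    by_cases hv : v ∈ S
    · rw [if_pos hv, hin v hv]
    · rw [if_neg hv, hout v hv]
  rw [Finset.prod_congr rfl (fun v _ => this v), Finset.prod_ite]
  have e1 : Finset.univ.filter (fun v : Fin n => v ∈ S) = S := Finset.filter_univ_mem S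
  have e2 : Finset.univ.filter (fun v : Fin n => ¬ v ∈ S) = Sᶜ := by
    ext u; simp
  rw [e1, e2, Finset.prod_const, Finset.prod_const, Finset.card_compl, Fintype.card_fin]

private lemma wt_total {r : ℕ} (n : ℕ) (μ : Fin r → ℝ) (K : Fin r → ℕ)
    (hsum : ∑ i, μ i = 1) (hlt : ∀ i, K i < n) :
    (∑ ω : Config n r, wt n μ K ω) = 1 := by
  classical
  have h1 : (∑ ω : Config n r, wt n μ K ω)
      = ∏ v : Fin n, ∑ p : Fin r × Finset (Fin n),
        (if p.2.card = K p.1 ∧ v ∉ p.2 then μ p.1 / ((n - 1).choose (K p.1) : ℝ) else 0) := by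
    exact sum_wt_prod (fun v p => if p.2.card = K p.1 ∧ v ∉ p.2 then μ p.1 / ((n - 1).choose (K p.1) : ℝ) else 0)
  rw [h1]
  have h2 : ∀ v : Fin n, (∑ p : Fin r × Finset (Fin n),
      (if p.2.card = K p.1 ∧ v ∉ p.2 then μ p.1 / ((n - 1).choose (K p.1) : ℝ) else 0)) = 1 := by
    intro v
    rw [Fintype.sum_prod_type]
    have h3 : ∀ c : Fin r, (∑ T : Finset (Fin n),
        (if T.card = K c ∧ v ∉ T then μ c / ((n - 1).choose (K c) : ℝ) else 0)) = μ c := by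
      intro c
      have he : ∀ T : Finset (Fin n), (T.card = K c ∧ v ∉ T) ↔ (T ⊆ Finset.univ.erase v ∧ T.card = K c) := by
        intro T
        constructor
        · rintro ⟨h1, h2⟩
          exact ⟨fun u hu => Finset.mem_erase.2 ⟨fun h => h2 (h ▸ hu), Finset.mem_univ u⟩, h1⟩
        · rintro ⟨h1, h2⟩
          exact ⟨h2, fun hv => (Finset.mem_erase.1 (h1 hv)).1 rfl⟩
      rw [Finset.sum_congr rfl (fun T _ => by rw [if_congr (he T) rfl rfl])]
      rw [sum_if_subset]
      have hcard : (Finset.univ.erase v).card = n - 1 := by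
        rw [Finset.card_erase_of_mem (Finset.mem_univ v), Finset.card_univ, Fintype.card_fin]
      rw [hcard]
      have hC : (0:ℝ) < ((n-1).choose (K c) : ℝ) := by
        exact_mod_cast Nat.choose_pos (Nat.le_sub_one_of_lt (hlt c))
      field_simp
    calc (∑ c : Fin r, ∑ T : Finset (Fin n),
        (if T.card = K c ∧ v ∉ T then μ c / ((n - 1).choose (K c) : ℝ) else 0))
        = ∑ c : Fin r, μ c := Finset.sum_congr rfl (fun c _ => h3 c)
      _ = 1 := hsum
  rw [Finset.prod_congr rfl (fun v _ => h2 v)]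
  simp

private lemma exists_cut {n r : ℕ} (hn : 2 ≤ n) {K : Fin r → ℕ} (hone : ∀ i, 1 ≤ K i)
    (ω : Config n r) (hsupp : ∀ v, (ω v).2.card = K (ω v).1 ∧ v ∉ (ω v).2)
    (hdisc : ¬ (graphOf ω).Connected) :
    ∃ S : Finset (Fin n), 2 ≤ S.card ∧ 2 * S.card ≤ n ∧
      (∀ v : Fin n, (v ∈ S → (ω v).2 ⊆ S) ∧ (v ∉ S → ∀ u ∈ (ω v).2, u ∉ S)) := by
  classical
  have hne : Nonempty (Fin n) := ⟨⟨0, by omega⟩⟩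
  have hadj : ∀ v u : Fin n, u ∈ (ω v).2 → (graphOf ω).Adj v u := by
    intro v u hu
    exact (show v ≠ u ∧ (v ∈ (ω u).2 ∨ u ∈ (ω v).2) from ⟨fun h => (hsupp v).2 (h ▸ hu), Or.inr hu⟩)
  have hnb : ∀ v : Fin n, ∃ u, u ∈ (ω v).2 := by
    intro v
    have : 0 < (ω v).2.card := by rw [(hsupp v).1]; exact hone _
    obtain ⟨u, hu⟩ := Finset.card_pos.1 this
    exact ⟨u, hu⟩
  have hpre : ¬ (graphOf ω).Preconnected := fun hp => hdisc ((graphOf ω).connected_iff.2 ⟨hp, hne⟩)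
  rw [SimpleGraph.Preconnected] at hpre
  push_neg at hpre
  obtain ⟨u₀, v₀, hreach⟩ := hpre
  set C : Finset (Fin n) := Finset.univ.filter (fun w => (graphOf ω).Reachable u₀ w) with hC
  have hmemC : ∀ w, w ∈ C ↔ (graphOf ω).Reachable u₀ w := by
    intro w; rw [hC]; simp
  have hcut : ∀ w, (w ∈ C → (ω w).2 ⊆ C) ∧ (w ∉ C → ∀ u ∈ (ω w).2, u ∉ C) := by
    intro w
    constructor
    · intro hw u hu
      rw [hmemC] at hw ⊢
      exact hw.trans (hadj w u hu).reachable
    · intro hw u hu hucon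
      rw [hmemC] at hucon
      exact hw ((hmemC w).2 (hucon.trans ((hadj w u hu).symm.reachable)))
  have hu₀ : u₀ ∈ C := (hmemC u₀).2 (SimpleGraph.Reachable.refl u₀)
  have hv₀ : v₀ ∉ C := fun h => hreach ((hmemC v₀).1 h)
  have hcard2 : 2 ≤ C.card := by
    obtain ⟨u, hu⟩ := hnb u₀
    have huC : u ∈ C := (hcut u₀).1 hu₀ hu
    have hne' : u₀ ≠ u := fun h => (hsupp u₀).2 (h ▸ hu)
    exact Finset.one_lt_card.2 ⟨u₀, hu₀, u, huC, hne'⟩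
  have hcard2c : 2 ≤ Cᶜ.card := by
    obtain ⟨u, hu⟩ := hnb v₀
    have huC : u ∉ C := (hcut v₀).2 hv₀ u hu
    have hne' : v₀ ≠ u := fun h => (hsupp v₀).2 (h ▸ hu)
    exact Finset.one_lt_card.2 ⟨v₀, Finset.mem_compl.2 hv₀, u, Finset.mem_compl.2 huC, hne'⟩
  have hCn : C.card ≤ n := by
    simpa using Finset.card_le_card (Finset.subset_univ C)
  have hcompl : Cᶜ.card = n - C.card := by
    rw [Finset.card_compl, Fintype.card_fin]
  by_cases h2 : 2 * C.card ≤ n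
  · exact ⟨C, hcard2, h2, hcut⟩
  · refine ⟨Cᶜ, hcard2c, by omega, ?_⟩
    intro v
    constructor
    · intro hv u hu
      exact Finset.mem_compl.2 ((hcut v).2 (Finset.mem_compl.1 hv) u hu)
    · intro hv u hu
      have hvC : v ∈ C := by
        by_contra hvc
        exact hv (Finset.mem_compl.2 hvc)
      have := (hcut v).1 hvC hu
      simp [this]

private lemma binom_term_le_one (n ℓ : ℕ) (h : ℓ ≤ n) (hn : 0 < n) :
    (n.choose ℓ : ℝ) * ((ℓ:ℝ)/n) ^ ℓ * (((n:ℝ)-ℓ)/n) ^ (n-ℓ) ≤ 1 := by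
  have hn0 : (0:ℝ) < n := by exact_mod_cast hn
  have hsum : ((ℓ:ℝ)/n) + (((n:ℝ)-ℓ)/n) = 1 := by field_simp; ring
  have hexp := add_pow ((ℓ:ℝ)/n) (((n:ℝ)-ℓ)/n) n
  rw [hsum, one_pow] at hexp
  have hterm : ∀ k ∈ Finset.range (n+1),
      (0:ℝ) ≤ ((ℓ:ℝ)/n) ^ k * (((n:ℝ)-ℓ)/n) ^ (n-k) * (n.choose k : ℝ) := by
    intro k _
    have h1 : (0:ℝ) ≤ (ℓ:ℝ)/n := by positivity
    have h2 : (0:ℝ) ≤ ((n:ℝ)-ℓ)/n := by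
      apply div_nonneg _ (le_of_lt hn0)
      have : (ℓ:ℝ) ≤ n := by exact_mod_cast h
      linarith
    positivity
  have hmem : ℓ ∈ Finset.range (n+1) := Finset.mem_range.2 (by omega)
  have := Finset.single_le_sum hterm hmem
  rw [← hexp] at this
  calc (n.choose ℓ : ℝ) * ((ℓ:ℝ)/n) ^ ℓ * (((n:ℝ)-ℓ)/n) ^ (n-ℓ)
      = ((ℓ:ℝ)/n) ^ ℓ * (((n:ℝ)-ℓ)/n) ^ (n-ℓ) * (n.choose ℓ : ℝ) := by ring
    _ ≤ 1 := this

private lemma per_ell_bound (n ℓ Kr : ℕ) (q mt x a b : ℝ)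
    (hq : 0 < q) (hmt : 0 < mt) (hsum1 : mt + q = 1)
    (hx : 0 ≤ x)
    (hx4 : 4 * x + 1 ≤ (Kr:ℝ)) (hK1 : 1 ≤ Kr)
    (hl2 : 2 ≤ ℓ) (hln : 2 * ℓ ≤ n)
    (ha0 : 0 ≤ a) (hb0 : 0 ≤ b)
    (ha : a ≤ mt * (((ℓ:ℝ)-1)/((n:ℝ)-1)) * (1 + q * x))
    (hb : b ≤ mt * (((n:ℝ)-1-ℓ)/((n:ℝ)-1)) + q * (((n:ℝ)-1-ℓ)/((n:ℝ)-1)) ^ Kr) :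
    (n.choose ℓ : ℝ) * a ^ ℓ * b ^ (n - ℓ) ≤ mt ^ ℓ *
      max (Real.exp (-2 * q * (((Kr:ℝ) - 1)/4 - x)))
          (Real.exp (-q * ((n:ℝ)/2) * (1 - Real.exp (-1) - x))) := by
  have hl4 : 4 ≤ n := by omega
  have hlR : (2:ℝ) ≤ (ℓ:ℝ) := by exact_mod_cast hl2
  have hlnR : 2 * (ℓ:ℝ) ≤ (n:ℝ) := by exact_mod_cast hln
  have hln' : ℓ ≤ n := by omega
  have hn1 : (0:ℝ) < (n:ℝ) - 1 := by
    have : (4:ℝ) ≤ (n:ℝ) := by exact_mod_cast hl4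
    linarith
  have hn0 : (0:ℝ) < (n:ℝ) := by linarith
  set z : ℝ := ((ℓ:ℝ)-1)/((n:ℝ)-1) with hzdef
  set y : ℝ := ((n:ℝ)-1-ℓ)/((n:ℝ)-1) with hydef
  have hz0 : 0 ≤ z := by
    apply div_nonneg _ (le_of_lt hn1); linarith
  have hy0 : 0 ≤ y := by
    apply div_nonneg _ (le_of_lt hn1); linarith
  have hy1 : y ≤ 1 := by
    rw [hydef, div_le_one hn1]; linarith
  set w : ℝ := 1 - y ^ (Kr - 1) with hwdef
  have hw0 : 0 ≤ w := by
    have : y ^ (Kr - 1) ≤ 1 := pow_le_one₀ hy0 hy1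
    rw [hwdef]; linarith
  have hw1 : w ≤ 1 := by
    have : 0 ≤ y ^ (Kr - 1) := pow_nonneg hy0 _
    rw [hwdef]; linarith
  -- bound b
  have hyK : y ^ Kr = y ^ (Kr - 1) * y := by
    rw [← pow_succ, Nat.sub_add_cancel hK1]
  have hb2 : b ≤ y * Real.exp (-(q * w)) := by
    have h1 : b ≤ y * (1 - q * w) := by
      have : mt * y + q * y ^ Kr = y * (1 - q * w) := by
        rw [hyK, hwdef]; linear_combination y * hsum1
      linarith [hb, this.symm.le]
    have h2 : 1 - q * w ≤ Real.exp (-(q * w)) := Real.one_sub_le_exp_neg (q * w)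
    calc b ≤ y * (1 - q * w) := h1
      _ ≤ y * Real.exp (-(q * w)) := by
          apply mul_le_mul_of_nonneg_left h2 hy0
  -- main chain
  have hAa : a ^ ℓ ≤ (mt * z * (1 + q * x)) ^ ℓ := pow_le_pow_left₀ ha0 ha ℓ
  have hBb : b ^ (n - ℓ) ≤ (y * Real.exp (-(q * w))) ^ (n - ℓ) := pow_le_pow_left₀ hb0 hb2 _
  have hchain1 : (n.choose ℓ : ℝ) * a ^ ℓ * b ^ (n - ℓ)
      ≤ (n.choose ℓ : ℝ) * (mt * z * (1 + q * x)) ^ ℓ * (y * Real.exp (-(q * w))) ^ (n - ℓ) := by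
    have hc0 : (0:ℝ) ≤ (n.choose ℓ : ℝ) := by positivity
    apply mul_le_mul
    · exact mul_le_mul_of_nonneg_left hAa hc0
    · exact hBb
    · positivity
    · positivity
  -- binomial part
  have hzn : z ≤ (ℓ:ℝ)/n := by
    rw [hzdef, div_le_div_iff₀ hn1 hn0]
    have expand : (((ℓ:ℝ)-1)*n) - ((ℓ:ℝ)*((n:ℝ)-1)) = (ℓ:ℝ) - n := by ring
    linarith [expand, hlnR, hlR]
  have hyn : y ≤ ((n:ℝ)-ℓ)/n := by
    rw [hydef, div_le_div_iff₀ hn1 hn0]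
    have expand : (((n:ℝ)-1-ℓ)*n) - (((n:ℝ)-ℓ)*((n:ℝ)-1)) = -(ℓ:ℝ) := by ring
    linarith [expand, hlR]
  have hbinom : (n.choose ℓ : ℝ) * z ^ ℓ * y ^ (n - ℓ) ≤ 1 := by
    calc (n.choose ℓ : ℝ) * z ^ ℓ * y ^ (n - ℓ)
        ≤ (n.choose ℓ : ℝ) * ((ℓ:ℝ)/n) ^ ℓ * (((n:ℝ)-ℓ)/n) ^ (n-ℓ) := by
          apply mul_le_mul
          · exact mul_le_mul_of_nonneg_left (pow_le_pow_left₀ hz0 hzn ℓ) (by positivity)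
          · exact pow_le_pow_left₀ hy0 hyn _
          · positivity
          · positivity
      _ ≤ 1 := binom_term_le_one n ℓ hln' (by omega)
  have hqx0 : 0 ≤ q * x := mul_nonneg (le_of_lt hq) hx
  have hone : (1 + q * x) ^ ℓ ≤ Real.exp ((ℓ:ℝ) * (q * x)) := by
    calc (1 + q * x) ^ ℓ ≤ Real.exp (q * x) ^ ℓ := by
          apply pow_le_pow_left₀ (by linarith) _ ℓ
          linarith [Real.add_one_le_exp (q * x)]
      _ = Real.exp ((ℓ:ℝ) * (q * x)) := by rw [← Real.exp_nat_mul]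
  have hmnℓ : ((n - ℓ : ℕ) : ℝ) = (n:ℝ) - ℓ := by
    push_cast [Nat.cast_sub hln']; ring
  have hexpm : Real.exp (-(q * w)) ^ (n - ℓ) = Real.exp (((n:ℝ) - ℓ) * (-(q * w))) := by
    rw [← Real.exp_nat_mul, hmnℓ]
  have hchain2 : (n.choose ℓ : ℝ) * (mt * z * (1 + q * x)) ^ ℓ * (y * Real.exp (-(q * w))) ^ (n - ℓ)
      ≤ mt ^ ℓ * Real.exp ((ℓ:ℝ) * (q * x) + ((n:ℝ) - ℓ) * (-(q * w))) := by
    have e1 : (n.choose ℓ : ℝ) * (mt * z * (1 + q * x)) ^ ℓ * (y * Real.exp (-(q * w))) ^ (n - ℓ)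
        = mt ^ ℓ * ((1 + q * x) ^ ℓ * Real.exp (-(q * w)) ^ (n - ℓ))
          * ((n.choose ℓ : ℝ) * z ^ ℓ * y ^ (n - ℓ)) := by
      rw [mul_pow, mul_pow, mul_pow]; ring
    rw [e1]
    have e2 : (1 + q * x) ^ ℓ * Real.exp (-(q * w)) ^ (n - ℓ)
        ≤ Real.exp ((ℓ:ℝ) * (q * x) + ((n:ℝ) - ℓ) * (-(q * w))) := by
      rw [Real.exp_add, hexpm]
      apply mul_le_mul_of_nonneg_right hone (by positivity)
    calc mt ^ ℓ * ((1 + q * x) ^ ℓ * Real.exp (-(q * w)) ^ (n - ℓ))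
          * ((n.choose ℓ : ℝ) * z ^ ℓ * y ^ (n - ℓ))
        ≤ mt ^ ℓ * ((1 + q * x) ^ ℓ * Real.exp (-(q * w)) ^ (n - ℓ)) * 1 := by
          apply mul_le_mul_of_nonneg_left hbinom
          positivity
      _ = mt ^ ℓ * ((1 + q * x) ^ ℓ * Real.exp (-(q * w)) ^ (n - ℓ)) := by ring
      _ ≤ mt ^ ℓ * Real.exp ((ℓ:ℝ) * (q * x) + ((n:ℝ) - ℓ) * (-(q * w))) := by
          apply mul_le_mul_of_nonneg_left e2 (by positivity)
  -- exponent analysis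
  have hKrR : (1:ℝ) ≤ (Kr:ℝ) := by exact_mod_cast hK1
  have hKm1 : ((Kr - 1 : ℕ) : ℝ) = (Kr:ℝ) - 1 := by
    push_cast [Nat.cast_sub hK1]; ring
  set s : ℝ := (ℓ:ℝ) * ((Kr:ℝ) - 1) / ((n:ℝ)-1) with hsdef
  have hs0 : 0 ≤ s := by
    apply div_nonneg _ (le_of_lt hn1)
    apply mul_nonneg (by linarith) (by linarith)
  have hy_exp : y = 1 - (ℓ:ℝ)/((n:ℝ)-1) := by
    rw [hydef]; field_simp
  have hws : 1 - Real.exp (-s) ≤ w := by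
    have h1 : y ≤ Real.exp (-((ℓ:ℝ)/((n:ℝ)-1))) := by
      rw [hy_exp]; exact Real.one_sub_le_exp_neg _
    have h2 : y ^ (Kr - 1) ≤ Real.exp (-((ℓ:ℝ)/((n:ℝ)-1))) ^ (Kr - 1) :=
      pow_le_pow_left₀ hy0 h1 _
    have h3 : Real.exp (-((ℓ:ℝ)/((n:ℝ)-1))) ^ (Kr - 1) = Real.exp (-s) := by
      rw [← Real.exp_nat_mul, hKm1, hsdef]
      congr 1; ring
    rw [hwdef]; rw [h3] at h2; linarith
  have he2 : Real.exp (-1) ≤ 1/2 := by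
    have h1 : (2:ℝ) ≤ Real.exp 1 := by
      have := Real.add_one_le_exp (1:ℝ); linarith
    rw [Real.exp_neg]
    rw [inv_le_comm₀ (Real.exp_pos 1) (by norm_num : (0:ℝ) < 1/2)]
    norm_num
    linarith
  have hm2 : (n:ℝ)/2 ≤ (n:ℝ) - ℓ := by linarith
  have hcases : Real.exp ((ℓ:ℝ) * (q * x) + ((n:ℝ) - ℓ) * (-(q * w)))
      ≤ max (Real.exp (-2 * q * (((Kr:ℝ) - 1)/4 - x)))
            (Real.exp (-q * ((n:ℝ)/2) * (1 - Real.exp (-1) - x))) := by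
    by_cases hcase : 1 ≤ s
    · apply le_max_of_le_right
      apply Real.exp_le_exp.2
      have hw2 : 1 - Real.exp (-1) ≤ w := by
        have : Real.exp (-s) ≤ Real.exp (-1) := Real.exp_le_exp.2 (by linarith)
        linarith
      have h1 : (ℓ:ℝ) * (q * x) ≤ ((n:ℝ)/2) * (q * x) := by
        apply mul_le_mul_of_nonneg_right (by linarith) hqx0
      have h2 : ((n:ℝ)/2) * (q * (1 - Real.exp (-1))) ≤ ((n:ℝ) - ℓ) * (q * w) := by
        apply mul_le_mul hm2
        · apply mul_le_mul_of_nonneg_left hw2 (le_of_lt hq)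
        · apply mul_nonneg (le_of_lt hq); linarith [Real.exp_pos (-1:ℝ)]
        · linarith
      have hring3 : -q * ((n:ℝ)/2) * (1 - Real.exp (-1) - x)
          = ((n:ℝ)/2) * (q * x) - ((n:ℝ)/2) * (q * (1 - Real.exp (-1))) := by ring
      linarith [h1, h2, hring3]
    · push_neg at hcase
      apply le_max_of_le_left
      apply Real.exp_le_exp.2
      -- convexity: exp(-s) ≤ 1 - s*(1 - exp(-1))
      have hconv : Real.exp (-s) ≤ 1 - s * (1 - Real.exp (-1)) := by
        have hmem1 : (-1:ℝ) ∈ (Set.univ : Set ℝ) := Set.mem_univ _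
        have hmem2 : (0:ℝ) ∈ (Set.univ : Set ℝ) := Set.mem_univ _
        have hcv := convexOn_exp.2 hmem1 hmem2 hs0 (by linarith : (0:ℝ) ≤ 1 - s) (by ring)
        simp only [smul_eq_mul, mul_zero, add_zero, mul_neg, mul_one, Real.exp_zero] at hcv
        linarith
      have hwge : (1 - Real.exp (-1)) * s ≤ w := by linarith
      have hKl0 : (0:ℝ) ≤ (ℓ:ℝ) * ((Kr:ℝ) - 1) := by
        apply mul_nonneg (by linarith) (by linarith)
      have hsm : (ℓ:ℝ) * ((Kr:ℝ)-1) / 2 ≤ s * ((n:ℝ) - ℓ) := by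
        rw [hsdef, div_mul_eq_mul_div, div_le_div_iff₀ (by norm_num : (0:ℝ) < 2) hn1]
        have hd : (0:ℝ) ≤ 2*((n:ℝ)-ℓ) - ((n:ℝ)-1) := by linarith
        have key : (0:ℝ) ≤ ((ℓ:ℝ)*((Kr:ℝ)-1)) * (2*((n:ℝ)-ℓ) - ((n:ℝ)-1)) := mul_nonneg hKl0 hd
        have expand : (ℓ:ℝ)*((Kr:ℝ)-1)*((n:ℝ)-ℓ)*2 - (ℓ:ℝ)*((Kr:ℝ)-1)*((n:ℝ)-1)
            = ((ℓ:ℝ)*((Kr:ℝ)-1)) * (2*((n:ℝ)-ℓ) - ((n:ℝ)-1)) := by ring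
        linarith [key, expand]
      have he1pos : (0:ℝ) ≤ 1 - Real.exp (-1) := by linarith [Real.exp_pos (-1:ℝ)]
      have h2 : q * (1 - Real.exp (-1)) * ((ℓ:ℝ) * ((Kr:ℝ)-1) / 2) ≤ ((n:ℝ) - ℓ) * (q * w) := by
        calc q * (1 - Real.exp (-1)) * ((ℓ:ℝ) * ((Kr:ℝ)-1) / 2)
            ≤ q * (1 - Real.exp (-1)) * (s * ((n:ℝ) - ℓ)) := by
              apply mul_le_mul_of_nonneg_left hsm
              exact mul_nonneg (le_of_lt hq) he1pos
          _ = ((n:ℝ) - ℓ) * (q * ((1 - Real.exp (-1)) * s)) := by ring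
          _ ≤ ((n:ℝ) - ℓ) * (q * w) := by
              apply mul_le_mul_of_nonneg_left _ (by linarith : (0:ℝ) ≤ (n:ℝ) - ℓ)
              exact mul_le_mul_of_nonneg_left hwge (le_of_lt hq)
      have hprod : (0:ℝ) ≤ (1 - Real.exp (-1) - 1/2) * ((Kr:ℝ) - 1) :=
        mul_nonneg (by linarith) (by linarith)
      have hc0 : 0 ≤ (1 - Real.exp (-1)) * ((Kr:ℝ)-1) / 2 - x := by
        have expand : (1 - Real.exp (-1)) * ((Kr:ℝ)-1) / 2 - x
            = ((1 - Real.exp (-1) - 1/2) * ((Kr:ℝ) - 1))/2 + (((Kr:ℝ)-1)/4 - x) := by ring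
        linarith [hprod, expand, hx4]
      have hlc : 2 * ((1 - Real.exp (-1)) * ((Kr:ℝ)-1) / 2 - x) ≤ (ℓ:ℝ) * ((1 - Real.exp (-1)) * ((Kr:ℝ)-1) / 2 - x) :=
        mul_le_mul_of_nonneg_right hlR hc0
      have h5 : ((Kr:ℝ)-1)/2 - 2*x ≤ (ℓ:ℝ) * ((1 - Real.exp (-1)) * ((Kr:ℝ)-1) / 2 - x) := by
        have expand2 : 2 * ((1 - Real.exp (-1)) * ((Kr:ℝ)-1) / 2 - x) - (((Kr:ℝ)-1)/2 - 2*x)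
            = (1 - Real.exp (-1) - 1/2) * ((Kr:ℝ) - 1) := by ring
        linarith [hlc, hprod, expand2]
      have h6 : q * (((Kr:ℝ)-1)/2 - 2*x) ≤ q * ((ℓ:ℝ) * ((1 - Real.exp (-1)) * ((Kr:ℝ)-1) / 2 - x)) :=
        mul_le_mul_of_nonneg_left h5 (le_of_lt hq)
      have hring1 : (ℓ:ℝ) * (q * x) - q * (1 - Real.exp (-1)) * ((ℓ:ℝ) * ((Kr:ℝ)-1) / 2)
          = -(q * ((ℓ:ℝ) * ((1 - Real.exp (-1)) * ((Kr:ℝ)-1) / 2 - x))) := by ring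
      have hring2 : -2 * q * (((Kr:ℝ) - 1)/4 - x) = -(q * (((Kr:ℝ)-1)/2 - 2*x)) := by ring
      linarith [h2, h6, hring1, hring2]
  calc (n.choose ℓ : ℝ) * a ^ ℓ * b ^ (n - ℓ)
      ≤ (n.choose ℓ : ℝ) * (mt * z * (1 + q * x)) ^ ℓ * (y * Real.exp (-(q * w))) ^ (n - ℓ) := hchain1
    _ ≤ mt ^ ℓ * Real.exp ((ℓ:ℝ) * (q * x) + ((n:ℝ) - ℓ) * (-(q * w))) := hchain2
    _ ≤ mt ^ ℓ * max (Real.exp (-2 * q * (((Kr:ℝ) - 1)/4 - x)))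
            (Real.exp (-q * ((n:ℝ)/2) * (1 - Real.exp (-1) - x))) := by
        apply mul_le_mul_of_nonneg_left hcases (by positivity)

/-- precise form of the one-law, eq. (9) of the paper. For every `n ≥ 2`
and admissible `K` with `K₁ = 1` and `K_r ≥ ⌈4·((1/2)^{K_r−1}/μ̃) + 1⌉`,
`P(n; μ, K) ≥ 1 − (μ̃²/(1 − μ̃)) · Ψ(n, μ, K)`. -/

theorem one_law_precise
    (r : ℕ) (hr : 2 ≤ r) (μ : Fin r → ℝ)
    (hμ : ∀ i, 0 < μ i) (hsum : ∑ i, μ i = 1)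
    (c0 lst : Fin r) (hc0 : (c0 : ℕ) = 0) (hlst : (lst : ℕ) = r - 1)
    (μt : ℝ) (hμt : μt = ∑ i ∈ Finset.univ.erase lst, μ i)
    (n : ℕ) (hn : 2 ≤ n)
    (K : Fin r → ℕ) (hmono : Monotone K) (hone : ∀ i, 1 ≤ K i) (hlt : ∀ i, K i < n)
    (hK1 : K c0 = 1)
    (hbig : ⌈4 * ((1 / 2 : ℝ) ^ (K lst - 1) / μt) + 1⌉ ≤ (K lst : ℤ)) :
    Pconn n μ K ≥ 1 - (μt ^ 2 / (1 - μt)) *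
      max
        (Real.exp (-2 * (1 - μt) *
          (((K lst : ℝ) - 1) / 4 - (1 / 2 : ℝ) ^ (K lst - 1) / μt)))
        (Real.exp (-(1 - μt) * ((n : ℝ) / 2) *
          (1 - Real.exp (-1) - (1 / 2 : ℝ) ^ (K lst - 1) / μt))) := by
  classical
  set x : ℝ := (1 / 2 : ℝ) ^ (K lst - 1) / μt with hxdef
  set M : ℝ := max
        (Real.exp (-2 * (1 - μt) * (((K lst : ℝ) - 1) / 4 - x)))
        (Real.exp (-(1 - μt) * ((n : ℝ) / 2) * (1 - Real.exp (-1) - x))) with hMdef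
  -- basic constants
  have hlstne : c0 ≠ lst := by
    intro h; rw [h] at hc0; omega
  have hq1 : μt + μ lst = 1 := by
    rw [hμt, Finset.sum_erase_add Finset.univ μ (Finset.mem_univ lst)]; exact hsum
  have hμtpos : 0 < μt := by
    rw [hμt]
    have hmem : c0 ∈ Finset.univ.erase lst := Finset.mem_erase.2 ⟨hlstne, Finset.mem_univ _⟩
    exact lt_of_lt_of_le (hμ c0) (Finset.single_le_sum (fun i _ => (hμ i).le) hmem)
  have hqpos : 0 < 1 - μt := by linarith [hμ lst]
  have hqlst : 1 - μt = μ lst := by linarith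
  have hx0 : 0 ≤ x := by positivity
  have hmtx : μt * x = (1 / 2 : ℝ) ^ (K lst - 1) := by
    rw [hxdef]; field_simp
  have hx4 : 4 * x + 1 ≤ ((K lst : ℕ) : ℝ) := by
    have h1 : (4 * x + 1 : ℝ) ≤ ((⌈4 * x + 1⌉ : ℤ) : ℝ) := Int.le_ceil _
    have h2 : ((⌈4 * x + 1⌉ : ℤ) : ℝ) ≤ (((K lst : ℕ) : ℤ) : ℝ) := by
      exact_mod_cast hbig
    have h3 : (((K lst : ℕ) : ℤ) : ℝ) = ((K lst : ℕ) : ℝ) := by push_cast; ring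
    linarith [h1, h2, h3.le, h3.ge]
  have hM0 : 0 ≤ M := le_trans (Real.exp_pos _).le (le_max_left _ _)
  have hwt0 : ∀ ω : Config n r, 0 ≤ wt n μ K ω := by
    intro ω
    apply Finset.prod_nonneg
    intro v _
    split_ifs
    · exact div_nonneg (hμ _).le (Nat.cast_nonneg _)
    · exact le_refl 0
  -- events
  set 𝒮 : Finset (Finset (Fin n)) :=
    Finset.univ.filter (fun S : Finset (Fin n) => 2 ≤ S.card ∧ 2 * S.card ≤ n) with hSdef
  set Iso : Finset (Fin n) → Set (Config n r) := fun S =>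
    {ω : Config n r | ∀ v : Fin n, (v ∈ S → (ω v).2 ⊆ S) ∧ (v ∉ S → ∀ u ∈ (ω v).2, u ∉ S)}
    with hIsodef
  set D : Set (Config n r) := {ω : Config n r | ¬ (graphOf ω).Connected} with hDdef
  -- complement:  Pconn = 1 - Pr D
  have hcompl : Pconn n μ K = 1 - Pr n μ K D := by
    have hpt : ∀ ω : Config n r,
        Set.indicator {ω : Config n r | (graphOf ω).Connected} (wt n μ K) ω
          + Set.indicator D (wt n μ K) ω = wt n μ K ω := by
      intro ω
      rw [Set.indicator_apply, Set.indicator_apply]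
      by_cases h : (graphOf ω).Connected
      · have h1 : ω ∈ {ω : Config n r | (graphOf ω).Connected} := h
        have h2 : ω ∉ D := fun hc => hc h
        rw [if_pos h1, if_neg h2]; ring
      · have h1 : ω ∉ {ω : Config n r | (graphOf ω).Connected} := h
        have h2 : ω ∈ D := h
        rw [if_neg h1, if_pos h2]; ring
    have hsum2 : Pconn n μ K + Pr n μ K D = 1 := by
      unfold Pconn Pr
      rw [← Finset.sum_add_distrib]
      rw [Finset.sum_congr rfl (fun ω _ => hpt ω)]
      exact wt_total n μ K hsum hlt
    linarith
  -- union bound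
  have hunion : Pr n μ K D ≤ ∑ S ∈ 𝒮, Pr n μ K (Iso S) := by
    have hswap : (∑ S ∈ 𝒮, Pr n μ K (Iso S))
        = ∑ ω : Config n r, ∑ S ∈ 𝒮, Set.indicator (Iso S) (wt n μ K) ω := by
      unfold Pr; rw [Finset.sum_comm]
    rw [hswap]
    unfold Pr
    apply Finset.sum_le_sum
    intro ω _
    by_cases hD : ω ∈ D
    · by_cases hz : wt n μ K ω = 0
      · rw [Set.indicator_of_mem hD, hz]
        apply Finset.sum_nonneg
        intro S _
        exact Set.indicator_nonneg (fun ω' _ => hwt0 ω') ω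
      · have hsupp : ∀ v : Fin n, (ω v).2.card = K (ω v).1 ∧ v ∉ (ω v).2 := by
          intro v
          by_contra hcon
          apply hz
          unfold wt
          exact Finset.prod_eq_zero (Finset.mem_univ v) (by rw [if_neg hcon])
        obtain ⟨S, hS2, hSn, hSiso⟩ := exists_cut hn hone ω hsupp hD
        have hSmem : S ∈ 𝒮 := by
          rw [hSdef]; exact Finset.mem_filter.2 ⟨Finset.mem_univ S, hS2, hSn⟩
        have hωIso : ω ∈ Iso S := hSiso
        have hle : Set.indicator D (wt n μ K) ω = Set.indicator (Iso S) (wt n μ K) ω := by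
          rw [Set.indicator_of_mem hD, Set.indicator_of_mem hωIso]
        rw [hle]
        apply Finset.single_le_sum (fun S' _ => Set.indicator_nonneg (fun ω' _ => hwt0 ω') ω) hSmem
    · rw [Set.indicator_of_notMem hD]
      apply Finset.sum_nonneg
      intro S _
      exact Set.indicator_nonneg (fun ω' _ => hwt0 ω') ω
  -- per-set probability
  set F : ℕ → ℝ := fun l =>
    (∑ c, μ c * (((l - 1).choose (K c) : ℝ) / ((n-1).choose (K c) : ℝ))) ^ l *
    (∑ c, μ c * (((n - l - 1).choose (K c) : ℝ) / ((n-1).choose (K c) : ℝ))) ^ (n - l)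
    with hFdef
  have hprS : ∀ S ∈ 𝒮, Pr n μ K (Iso S) = F S.card := by
    intro S _
    simp only [hIsodef, hFdef]
    exact pr_iso n μ K S
  have haP0 : ∀ l : ℕ, 0 ≤ (∑ c, μ c * (((l - 1).choose (K c) : ℝ) / ((n-1).choose (K c) : ℝ))) := by
    intro l
    apply Finset.sum_nonneg
    intro c _
    exact mul_nonneg (hμ c).le (div_nonneg (Nat.cast_nonneg _) (Nat.cast_nonneg _))
  have hbP0 : ∀ l : ℕ, 0 ≤ (∑ c, μ c * (((n - l - 1).choose (K c) : ℝ) / ((n-1).choose (K c) : ℝ))) := by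
    intro l
    apply Finset.sum_nonneg
    intro c _
    exact mul_nonneg (hμ c).le (div_nonneg (Nat.cast_nonneg _) (Nat.cast_nonneg _))
  have hF0 : ∀ l : ℕ, 0 ≤ F l := by
    intro l
    exact mul_nonneg (pow_nonneg (haP0 l) _) (pow_nonneg (hbP0 l) _)
  -- group by cardinality
  have hgroup : (∑ S ∈ 𝒮, Pr n μ K (Iso S)) ≤ ∑ l ∈ Finset.Icc 2 (n/2), (n.choose l : ℝ) * F l := by
    rw [Finset.sum_congr rfl hprS]
    have hmaps : ∀ S ∈ 𝒮, S.card ∈ Finset.Icc 2 (n/2) := by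
      intro S hS
      rw [hSdef] at hS
      obtain ⟨-, h2, hn2⟩ := Finset.mem_filter.1 hS
      refine Finset.mem_Icc.2 ⟨h2, ?_⟩
      rw [Nat.le_div_iff_mul_le (by norm_num : 0 < 2)]
      omega
    rw [← Finset.sum_fiberwise_of_maps_to hmaps (fun S => F S.card)]
    apply Finset.sum_le_sum
    intro l hl
    have hcongr : ∀ S ∈ 𝒮.filter (fun S => S.card = l), F S.card = F l := by
      intro S hS
      rw [(Finset.mem_filter.1 hS).2]
    rw [Finset.sum_congr rfl hcongr, Finset.sum_const, nsmul_eq_mul]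
    apply mul_le_mul_of_nonneg_right _ (hF0 l)
    have hsub : 𝒮.filter (fun S => S.card = l) ⊆ Finset.powersetCard l Finset.univ := by
      intro S hS
      exact Finset.mem_powersetCard.2 ⟨Finset.subset_univ S, (Finset.mem_filter.1 hS).2⟩
    calc ((𝒮.filter (fun S => S.card = l)).card : ℝ)
        ≤ ((Finset.powersetCard l (Finset.univ : Finset (Fin n))).card : ℝ) := by
          exact_mod_cast Finset.card_le_card hsub
      _ = (n.choose l : ℝ) := by
          rw [Finset.card_powersetCard, Finset.card_univ, Fintype.card_fin]
  -- per-l bound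
  have hperl : ∀ l ∈ Finset.Icc 2 (n/2), (n.choose l : ℝ) * F l ≤ μt ^ l * M := by
    intro l hl
    obtain ⟨hl2, hln2⟩ := Finset.mem_Icc.1 hl
    have hln : 2 * l ≤ n := by
      have := (Nat.le_div_iff_mul_le (by norm_num : 0 < 2)).1 hln2
      omega
    have hl4 : 4 ≤ n := by omega
    have hlen2 : l ≤ n - 2 := by omega
    have hn1R : (0:ℝ) < (n:ℝ) - 1 := by
      have : (4:ℝ) ≤ (n:ℝ) := by exact_mod_cast hl4
      linarith
    have hlR : (2:ℝ) ≤ (l:ℝ) := by exact_mod_cast hl2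
    have hlnR : 2 * (l:ℝ) ≤ (n:ℝ) := by exact_mod_cast hln
    -- casts
    have hc1 : ((l - 1 : ℕ) : ℝ) = (l:ℝ) - 1 := by
      have : 1 ≤ l := by omega
      push_cast [Nat.cast_sub this]; ring
    have hc2 : ((n - 1 : ℕ) : ℝ) = (n:ℝ) - 1 := by
      have : 1 ≤ n := by omega
      push_cast [Nat.cast_sub this]; ring
    have hc3 : ((n - l - 1 : ℕ) : ℝ) = (n:ℝ) - 1 - l := by
      have h5 : l + 1 ≤ n := by omega
      have : n - l - 1 = n - (l+1) := by omega
      rw [this]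
      push_cast [Nat.cast_sub h5]; ring
    set z : ℝ := ((l:ℝ) - 1)/((n:ℝ) - 1) with hzdef
    set y : ℝ := ((n:ℝ) - 1 - l)/((n:ℝ) - 1) with hydef
    have hz0 : 0 ≤ z := div_nonneg (by linarith) hn1R.le
    have hzhalf : z ≤ 1/2 := by
      rw [hzdef, div_le_iff₀ hn1R]; linarith
    have hy0 : 0 ≤ y := by
      apply div_nonneg _ hn1R.le
      have : (l:ℝ) ≤ (n:ℝ) - 2 := by
        have := hlnR; linarith
      linarith
    have hy1 : y ≤ 1 := by
      rw [hydef, div_le_one hn1R]; linarith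
    -- ratio bounds
    have hratio_a : ∀ c : Fin r, (((l - 1).choose (K c) : ℝ) / ((n-1).choose (K c) : ℝ)) ≤ z ^ (K c) := by
      intro c
      have h := choose_ratio_le (l-1) (n-1) (K c) (by omega) (by omega)
      rw [hc1, hc2] at h
      exact h
    have hratio_b : ∀ c : Fin r, (((n - l - 1).choose (K c) : ℝ) / ((n-1).choose (K c) : ℝ)) ≤ y ^ (K c) := by
      intro c
      have h := choose_ratio_le (n-l-1) (n-1) (K c) (by omega) (by omega)
      rw [hc3, hc2] at h
      exact h
    -- bound aP
    have haP : (∑ c, μ c * (((l - 1).choose (K c) : ℝ) / ((n-1).choose (K c) : ℝ)))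
        ≤ μt * z * (1 + (1 - μt) * x) := by
      have hsplit : (∑ c, μ c * (((l - 1).choose (K c) : ℝ) / ((n-1).choose (K c) : ℝ)))
          = (∑ c ∈ Finset.univ.erase lst, μ c * (((l - 1).choose (K c) : ℝ) / ((n-1).choose (K c) : ℝ)))
            + μ lst * (((l - 1).choose (K lst) : ℝ) / (((n-1).choose (K lst) : ℕ) : ℝ)) := by
        exact (Finset.sum_erase_add Finset.univ _ (Finset.mem_univ lst)).symm
      rw [hsplit]
      have h1 : (∑ c ∈ Finset.univ.erase lst, μ c * (((l - 1).choose (K c) : ℝ) / ((n-1).choose (K c) : ℝ)))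
          ≤ μt * z := by
        calc (∑ c ∈ Finset.univ.erase lst, μ c * (((l - 1).choose (K c) : ℝ) / ((n-1).choose (K c) : ℝ)))
            ≤ ∑ c ∈ Finset.univ.erase lst, μ c * z := by
              apply Finset.sum_le_sum
              intro c _
              apply mul_le_mul_of_nonneg_left _ (hμ c).le
              calc (((l - 1).choose (K c) : ℝ) / ((n-1).choose (K c) : ℝ))
                  ≤ z ^ (K c) := hratio_a c
                _ ≤ z := pow_le_of_le_one hz0 (by linarith) (by have := hone c; omega)
          _ = μt * z := by rw [← Finset.sum_mul, ← hμt]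
      have h2 : μ lst * (((l - 1).choose (K lst) : ℝ) / (((n-1).choose (K lst) : ℕ) : ℝ))
          ≤ (1 - μt) * (μt * x * z) := by
        rw [hqlst]
        apply mul_le_mul_of_nonneg_left _ (hμ lst).le
        calc (((l - 1).choose (K lst) : ℝ) / (((n-1).choose (K lst) : ℕ) : ℝ))
            ≤ z ^ (K lst) := hratio_a lst
          _ = z ^ (K lst - 1) * z := by rw [← pow_succ, Nat.sub_add_cancel (hone lst)]
          _ ≤ (1/2:ℝ) ^ (K lst - 1) * z := by
              apply mul_le_mul_of_nonneg_right _ hz0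
              exact pow_le_pow_left₀ hz0 hzhalf _
          _ = μt * x * z := by rw [hmtx]
      have hring : μt * z + (1 - μt) * (μt * x * z) = μt * z * (1 + (1 - μt) * x) := by ring
      linarith [h1, h2, hring]
    -- bound bP
    have hbP : (∑ c, μ c * (((n - l - 1).choose (K c) : ℝ) / ((n-1).choose (K c) : ℝ)))
        ≤ μt * y + (1 - μt) * y ^ (K lst) := by
      have hsplit : (∑ c, μ c * (((n - l - 1).choose (K c) : ℝ) / ((n-1).choose (K c) : ℝ)))
          = (∑ c ∈ Finset.univ.erase lst, μ c * (((n - l - 1).choose (K c) : ℝ) / ((n-1).choose (K c) : ℝ)))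
            + μ lst * (((n - l - 1).choose (K lst) : ℝ) / (((n-1).choose (K lst) : ℕ) : ℝ)) := by
        exact (Finset.sum_erase_add Finset.univ _ (Finset.mem_univ lst)).symm
      rw [hsplit, hqlst]
      have h1 : (∑ c ∈ Finset.univ.erase lst, μ c * (((n - l - 1).choose (K c) : ℝ) / ((n-1).choose (K c) : ℝ)))
          ≤ μt * y := by
        calc (∑ c ∈ Finset.univ.erase lst, μ c * (((n - l - 1).choose (K c) : ℝ) / ((n-1).choose (K c) : ℝ)))
            ≤ ∑ c ∈ Finset.univ.erase lst, μ c * y := by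
              apply Finset.sum_le_sum
              intro c _
              apply mul_le_mul_of_nonneg_left _ (hμ c).le
              calc (((n - l - 1).choose (K c) : ℝ) / ((n-1).choose (K c) : ℝ))
                  ≤ y ^ (K c) := hratio_b c
                _ ≤ y := pow_le_of_le_one hy0 hy1 (by have := hone c; omega)
          _ = μt * y := by rw [← Finset.sum_mul, ← hμt]
      have h2 : μ lst * (((n - l - 1).choose (K lst) : ℝ) / (((n-1).choose (K lst) : ℕ) : ℝ))
          ≤ μ lst * y ^ (K lst) :=
        mul_le_mul_of_nonneg_left (hratio_b lst) (hμ lst).le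
      linarith [h1, h2]
    -- apply per_ell_bound
    have := per_ell_bound n l (K lst) (1 - μt) μt x
      (∑ c, μ c * (((l - 1).choose (K c) : ℝ) / ((n-1).choose (K c) : ℝ)))
      (∑ c, μ c * (((n - l - 1).choose (K c) : ℝ) / ((n-1).choose (K c) : ℝ)))
      hqpos hμtpos (by linarith) hx0 hx4 (hone lst) hl2 hln (haP0 l) (hbP0 l)
      haP hbP
    rw [hFdef]
    calc (n.choose l : ℝ) *
        ((∑ c, μ c * (((l - 1).choose (K c) : ℝ) / ((n-1).choose (K c) : ℝ))) ^ l *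
         (∑ c, μ c * (((n - l - 1).choose (K c) : ℝ) / ((n-1).choose (K c) : ℝ))) ^ (n - l))
        = (n.choose l : ℝ) *
          (∑ c, μ c * (((l - 1).choose (K c) : ℝ) / ((n-1).choose (K c) : ℝ))) ^ l *
          (∑ c, μ c * (((n - l - 1).choose (K c) : ℝ) / ((n-1).choose (K c) : ℝ))) ^ (n - l) := by
          ring
      _ ≤ μt ^ l * M := this
  -- geometric sum
  have hgeo : (∑ l ∈ Finset.Icc 2 (n/2), μt ^ l * M) ≤ μt ^ 2 / (1 - μt) * M := by
    rw [← Finset.sum_mul]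
    apply mul_le_mul_of_nonneg_right _ hM0
    have hgeq : ∀ m : ℕ, 1 ≤ m → (∑ l ∈ Finset.Icc 2 m, μt ^ l) * (1 - μt) = μt^2 - μt^(m+1) := by
      intro m hm
      induction m, hm using Nat.le_induction with
      | base =>
        rw [Finset.Icc_eq_empty_of_lt (by omega)]
        simp
      | succ m hm ih =>
        rw [Finset.sum_Icc_succ_top (by omega : 2 ≤ m + 1), add_mul, ih]
        ring
    rw [le_div_iff₀ hqpos, hgeq (n/2) (by omega)]
    have hpN : 0 ≤ μt ^ (n/2+1) := by positivity
    linarith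
  -- final assembly
  have hchain : Pr n μ K D ≤ μt ^ 2 / (1 - μt) * M := by
    calc Pr n μ K D ≤ ∑ S ∈ 𝒮, Pr n μ K (Iso S) := hunion
      _ ≤ ∑ l ∈ Finset.Icc 2 (n/2), (n.choose l : ℝ) * F l := hgroup
      _ ≤ ∑ l ∈ Finset.Icc 2 (n/2), μt ^ l * M := Finset.sum_le_sum hperl
      _ ≤ μt ^ 2 / (1 - μt) * M := hgeo
  rw [ge_iff_le, hcompl]
  linarith [hchain]
end
end

section
/- In the inhomogeneous random K-out graph H(n; μ, K) with n ≥ 3, K_1 = 1, and 1 = K_1 ≤ K_2 ≤ … ≤ K_r < n, the probability of the event U_{12} (that vertices 1 and 2 are both class-1 and form an isolated component) equals μ_1² · (1/(n−1))² · ( Σ_{i=1}^r μ_i · C(n−3, K_i)/C(n−1, K_i) )^{n−2}, where C(x, y) denotes the binomial coefficient with the convention C(x, y) = 0 when x < y. -/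
open Finset Filter

noncomputable section

/-- Per-vertex factor used to factorize the indicator of `Uevent` times `wt`. -/
noncomputable def gfun {r : ℕ} (n : ℕ) (μ : Fin r → ℝ) (K : Fin r → ℕ)
    (c0 : Fin r) (v0 v1 : Fin n) (v : Fin n) (x : Fin r × Finset (Fin n)) : ℝ :=
  if v = v0 then (if x = (c0, {v1}) then μ c0 / ((n - 1).choose (K c0) : ℝ) else 0)
  else if v = v1 then (if x = (c0, {v0}) then μ c0 / ((n - 1).choose (K c0) : ℝ) else 0)
  else if x.2.card = K x.1 ∧ v ∉ x.2 ∧ v0 ∉ x.2 ∧ v1 ∉ x.2 then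
    μ x.1 / ((n - 1).choose (K x.1) : ℝ) else 0

lemma count_sum (n : ℕ) (t : Finset (Fin n)) (k : ℕ) (c : ℝ) :
    (∑ S : Finset (Fin n), if S.card = k ∧ S ⊆ t then c else 0)
    = (t.card.choose k : ℝ) * c := by
  have h1 : (Finset.univ.filter (fun S : Finset (Fin n) => S.card = k ∧ S ⊆ t))
      = Finset.powersetCard k t := by
    ext S; simp [Finset.mem_powersetCard, and_comm]
  rw [← Finset.sum_filter, h1, Finset.sum_const, Finset.card_powersetCard]
  simp [mul_comm]

lemma gen_sum {r : ℕ} (n : ℕ) (μ : Fin r → ℝ) (K : Fin r → ℕ)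
    (c0 : Fin r) (v0 v1 v : Fin n)
    (h01 : v0 ≠ v1) (h0 : v ≠ v0) (h1 : v ≠ v1) :
    (∑ x : Fin r × Finset (Fin n), gfun n μ K c0 v0 v1 v x)
    = ∑ i, μ i * ((n - 3).choose (K i) : ℝ) / ((n - 1).choose (K i) : ℝ) := by
  rw [Fintype.sum_prod_type]
  refine Finset.sum_congr rfl fun i _ => ?_
  have ht : (({v, v0, v1} : Finset (Fin n))ᶜ).card = n - 3 := by
    rw [Finset.card_compl, Fintype.card_fin]
    congr 1
    rw [Finset.card_insert_of_notMem (by simp [h0, h1]),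
      Finset.card_insert_of_notMem (by simp [h01]), Finset.card_singleton]
  have hsub : ∀ S : Finset (Fin n),
      (S ⊆ ({v, v0, v1} : Finset (Fin n))ᶜ) ↔ (v ∉ S ∧ v0 ∉ S ∧ v1 ∉ S) := by
    intro S
    constructor
    · intro h
      exact ⟨fun hv => by simpa using h hv, fun hv => by simpa using h hv,
        fun hv => by simpa using h hv⟩
    · rintro ⟨a, b, c⟩ x hx
      simp only [Finset.mem_compl, Finset.mem_insert, Finset.mem_singleton]
      push_neg
      exact ⟨fun e => a (e ▸ hx), fun e => b (e ▸ hx), fun e => c (e ▸ hx)⟩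
  have : (∑ S : Finset (Fin n), gfun n μ K c0 v0 v1 v (i, S))
      = ∑ S : Finset (Fin n),
        if S.card = K i ∧ S ⊆ ({v, v0, v1} : Finset (Fin n))ᶜ then
          μ i / ((n - 1).choose (K i) : ℝ) else 0 := by
    refine Finset.sum_congr rfl fun S _ => ?_
    simp only [gfun, if_neg h0, if_neg h1, hsub S]
  rw [this, count_sum, ht]
  ring

lemma indicator_factorize {r : ℕ} (n : ℕ) (μ : Fin r → ℝ) (K : Fin r → ℕ)
    (c0 : Fin r) (v0 v1 : Fin n) (h01 : v0 ≠ v1) (hK1 : K c0 = 1)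
    (ω : Config n r) :
    (Uevent c0 v0 v1).indicator (wt n μ K) ω = ∏ v, gfun n μ K c0 v0 v1 v (ω v) := by
  by_cases hω : ω ∈ Uevent c0 v0 v1
  · obtain ⟨hA, hB, hC, hD, hE⟩ := Set.mem_setOf_eq ▸ hω
    have h0eq : ω v0 = (c0, {v1}) := Prod.ext hA hC
    have h1eq : ω v1 = (c0, {v0}) := Prod.ext hB hD
    rw [Set.indicator_of_mem hω]
    unfold wt
    refine Finset.prod_congr rfl fun v _ => ?_
    by_cases hv0 : v = v0
    · subst hv0
      simp [gfun, h0eq, hK1, h01]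
    · by_cases hv1 : v = v1
      · subst hv1
        simp [gfun, h1eq, hK1, h01.symm]
      · obtain ⟨e0, e1⟩ := hE v hv0 hv1
        simp only [gfun, if_neg hv0, if_neg hv1]
        refine if_congr ?_ rfl rfl
        tauto
  · rw [Set.indicator_of_notMem hω]
    by_contra hne
    have allne := Finset.prod_ne_zero_iff.mp (Ne.symm hne)
    have h0eq : ω v0 = (c0, {v1}) := by
      by_contra hc
      exact allne v0 (Finset.mem_univ _) (by simp [gfun, hc])
    have h1eq : ω v1 = (c0, {v0}) := by
      by_contra hc
      exact allne v1 (Finset.mem_univ _) (by simp [gfun, hc, h01.symm])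
    have hgen : ∀ v : Fin n, v ≠ v0 → v ≠ v1 →
        v0 ∉ (ω v).2 ∧ v1 ∉ (ω v).2 := by
      intro v hv0 hv1
      have hcond : ¬ ¬ ((ω v).2.card = K (ω v).1 ∧ v ∉ (ω v).2 ∧
          v0 ∉ (ω v).2 ∧ v1 ∉ (ω v).2) := by
        intro hc
        exact allne v (Finset.mem_univ _) (by simp only [gfun, if_neg hv0, if_neg hv1, if_neg hc])
      rw [not_not] at hcond
      exact ⟨hcond.2.2.1, hcond.2.2.2⟩
    exact hω ⟨by rw [h0eq], by rw [h1eq], by rw [h0eq], by rw [h1eq], hgen⟩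

/-- With `K₁ = 1`, the probability of the event `U_{12}` (vertices `1`
and `2` are both class-1 and form an isolated component) equals
`μ₁² (1/(n−1))² ( ∑ i, μ i C(n−3, K i)/C(n−1, K i) )^{n−2}`. -/
theorem prob_U12
    (r : ℕ) (hr : 1 ≤ r) (μ : Fin r → ℝ)
    (hμ : ∀ i, 0 < μ i) (hsum : ∑ i, μ i = 1)
    (c0 : Fin r) (hc0 : (c0 : ℕ) = 0)
    (n : ℕ) (hn : 3 ≤ n)
    (K : Fin r → ℕ) (hmono : Monotone K) (hone : ∀ i, 1 ≤ K i) (hlt : ∀ i, K i < n)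
    (hK1 : K c0 = 1)
    (v0 v1 : Fin n) (hv0 : (v0 : ℕ) = 0) (hv1 : (v1 : ℕ) = 1) :
    Pr n μ K (Uevent c0 v0 v1) =
      (μ c0) ^ 2 * (1 / ((n : ℝ) - 1)) ^ 2 *
        (∑ i, μ i * ((n - 3).choose (K i) : ℝ) / ((n - 1).choose (K i) : ℝ)) ^ (n - 2) := by
  have h01 : v0 ≠ v1 := by
    intro h; rw [h, hv1] at hv0; exact one_ne_zero hv0
  have hcast : (((n - 1).choose (K c0) : ℕ) : ℝ) = (n : ℝ) - 1 := by
    rw [hK1, Nat.choose_one_right, Nat.cast_sub (by omega)]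
    norm_num
  have key : Pr n μ K (Uevent c0 v0 v1)
      = ∏ v : Fin n, ∑ x : Fin r × Finset (Fin n), gfun n μ K c0 v0 v1 v x := by
    unfold Pr
    rw [Finset.sum_congr rfl fun ω _ => indicator_factorize n μ K c0 v0 v1 h01 hK1 ω,
      ← Fintype.piFinset_univ, ← Finset.prod_univ_sum]
  have hS0 : (∑ x : Fin r × Finset (Fin n), gfun n μ K c0 v0 v1 v0 x)
      = μ c0 * (1 / ((n : ℝ) - 1)) := by
    have h : ∀ x : Fin r × Finset (Fin n), gfun n μ K c0 v0 v1 v0 x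
        = if x = (c0, ({v1} : Finset (Fin n))) then
            μ c0 / ((n - 1).choose (K c0) : ℝ) else 0 := fun x => by
      simp [gfun]
    rw [Finset.sum_congr rfl fun x _ => h x, Finset.sum_ite_eq' Finset.univ, hcast]
    rw [if_pos (Finset.mem_univ _)]; ring
  have hS1 : (∑ x : Fin r × Finset (Fin n), gfun n μ K c0 v0 v1 v1 x)
      = μ c0 * (1 / ((n : ℝ) - 1)) := by
    have h : ∀ x : Fin r × Finset (Fin n), gfun n μ K c0 v0 v1 v1 x
        = if x = (c0, ({v0} : Finset (Fin n))) then
            μ c0 / ((n - 1).choose (K c0) : ℝ) else 0 := fun x => by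
      simp [gfun, h01.symm]
    rw [Finset.sum_congr rfl fun x _ => h x, Finset.sum_ite_eq' Finset.univ, hcast]
    rw [if_pos (Finset.mem_univ _)]; ring
  rw [key, ← Finset.prod_mul_prod_compl ({v0, v1} : Finset (Fin n)),
    Finset.prod_pair h01, hS0, hS1]
  have hrest : (∏ v ∈ ({v0, v1} : Finset (Fin n))ᶜ,
      ∑ x : Fin r × Finset (Fin n), gfun n μ K c0 v0 v1 v x)
      = (∑ i, μ i * ((n - 3).choose (K i) : ℝ) / ((n - 1).choose (K i) : ℝ)) ^ (n - 2) := by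
    rw [Finset.prod_congr rfl fun v hv => by
      simp only [Finset.mem_compl, Finset.mem_insert, Finset.mem_singleton] at hv
      push_neg at hv
      exact gen_sum n μ K c0 v0 v1 v h01 hv.1 hv.2]
    rw [Finset.prod_const, Finset.card_compl, Fintype.card_fin, Finset.card_pair h01]
  rw [hrest]
  ring
end
end

section
/- In the inhomogeneous random K-out graph H(n; μ, K) with n ≥ 5, K_1 = 1, and 1 = K_1 ≤ K_2 ≤ … ≤ K_r < n, the probability of the joint event U_{12} ∩ U_{34} equals μ_1⁴ · (1/(n−1))⁴ · ( Σ_{i=1}^r μ_i · C(n−5, K_i)/C(n−1, K_i) )^{n−4}, i.e., E[χ_{12} χ_{34}] equals this quantity; here C(x, y) = 0 when x < y. -/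
open Finset Filter

noncomputable section

/-- per-vertex weight -/
noncomputable def wfun {r : ℕ} (n : ℕ) (μ : Fin r → ℝ) (K : Fin r → ℕ)
    (v : Fin n) (p : Fin r × Finset (Fin n)) : ℝ :=
  if p.2.card = K p.1 ∧ v ∉ p.2 then μ p.1 / ((n - 1).choose (K p.1) : ℝ) else 0

/-- per-vertex event indicator -/
noncomputable def chif {n r : ℕ} (c0 : Fin r) (v0 v1 v2 v3 : Fin n)
    (v : Fin n) (p : Fin r × Finset (Fin n)) : ℝ :=
  if v = v0 then (if p = (c0, ({v1} : Finset (Fin n))) then 1 else 0)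
  else if v = v1 then (if p = (c0, ({v0} : Finset (Fin n))) then 1 else 0)
  else if v = v2 then (if p = (c0, ({v3} : Finset (Fin n))) then 1 else 0)
  else if v = v3 then (if p = (c0, ({v2} : Finset (Fin n))) then 1 else 0)
  else (if v0 ∉ p.2 ∧ v1 ∉ p.2 ∧ v2 ∉ p.2 ∧ v3 ∉ p.2 then 1 else 0)

lemma factor_special {r n : ℕ} (μ : Fin r → ℝ) (K : Fin r → ℕ) (c0 : Fin r)
    (a b : Fin n) (hab : a ≠ b) (hK1 : K c0 = 1) (hn : 1 ≤ n) :
    ∑ p : Fin r × Finset (Fin n),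
      (if p = (c0, ({b} : Finset (Fin n))) then (1:ℝ) else 0) * wfun n μ K a p =
    μ c0 / ((n : ℝ) - 1) := by
  classical
  simp only [ite_mul, one_mul, zero_mul]
  rw [Fintype.sum_ite_eq']
  simp [wfun, hK1, hab, Nat.choose_one_right, Nat.cast_sub hn]

lemma factor_generic {r n : ℕ} (μ : Fin r → ℝ) (K : Fin r → ℕ)
    (v0 v1 v2 v3 l : Fin n)
    (hcard : ({v0, v1, v2, v3, l} : Finset (Fin n)).card = 5) :
    ∑ p : Fin r × Finset (Fin n),
      (if v0 ∉ p.2 ∧ v1 ∉ p.2 ∧ v2 ∉ p.2 ∧ v3 ∉ p.2 then (1:ℝ) else 0) * wfun n μ K l p =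
    ∑ i, μ i * ((n - 5).choose (K i) : ℝ) / ((n - 1).choose (K i) : ℝ) := by
  classical
  rw [Fintype.sum_prod_type]
  refine Finset.sum_congr rfl fun i _ => ?_
  have hTcard : (univ \ ({v0, v1, v2, v3, l} : Finset (Fin n))).card = n - 5 := by
    rw [Finset.card_sdiff_of_subset (Finset.subset_univ _), Finset.card_univ, Fintype.card_fin, hcard]
  have key : ∀ S : Finset (Fin n),
      (if v0 ∉ S ∧ v1 ∉ S ∧ v2 ∉ S ∧ v3 ∉ S then (1:ℝ) else 0) * wfun n μ K l (i, S) =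
      if S ∈ Finset.powersetCard (K i) (univ \ ({v0, v1, v2, v3, l} : Finset (Fin n))) then
        μ i / ((n - 1).choose (K i) : ℝ) else 0 := by
    intro S
    have hmem : S ∈ Finset.powersetCard (K i) (univ \ ({v0, v1, v2, v3, l} : Finset (Fin n))) ↔
        (v0 ∉ S ∧ v1 ∉ S ∧ v2 ∉ S ∧ v3 ∉ S) ∧ (S.card = K i ∧ l ∉ S) := by
      simp only [Finset.mem_powersetCard, Finset.subset_sdiff, Finset.subset_univ, true_and,
        Finset.disjoint_insert_right, Finset.disjoint_singleton_right]
      tauto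
    rw [wfun]
    simp only [ite_mul, one_mul, zero_mul]
    rw [← ite_and]
    exact if_congr hmem.symm rfl rfl
  simp only [key]
  rw [Finset.sum_ite_mem, Finset.univ_inter, Finset.sum_const,
    Finset.card_powersetCard, hTcard, nsmul_eq_mul]
  ring



lemma indicator_fact {r n : ℕ} (μ : Fin r → ℝ) (K : Fin r → ℕ) (c0 : Fin r)
    (v0 v1 v2 v3 : Fin n)
    (h01 : v0 ≠ v1) (h02 : v0 ≠ v2) (h03 : v0 ≠ v3)
    (h12 : v1 ≠ v2) (h13 : v1 ≠ v3) (h23 : v2 ≠ v3) (ω : Config n r) :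
    (Uevent c0 v0 v1 ∩ Uevent c0 v2 v3).indicator (wt n μ K) ω =
      ∏ v, chif c0 v0 v1 v2 v3 v (ω v) * wfun n μ K v (ω v) := by
  classical
  have hwt : wt n μ K ω = ∏ v, wfun n μ K v (ω v) := rfl
  rw [Finset.prod_mul_distrib, ← hwt]
  by_cases h : ω ∈ Uevent c0 v0 v1 ∩ Uevent c0 v2 v3
  · rw [Set.indicator_of_mem h]
    obtain ⟨⟨ha1, hb1, hG0, hG1, hoth1⟩, ⟨ha2, hb2, hG2, hG3, hoth2⟩⟩ := h
    have : ∏ v, chif c0 v0 v1 v2 v3 v (ω v) = 1 := by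
      refine Finset.prod_eq_one fun v _ => ?_
      by_cases e0 : v = v0
      · subst e0; simp [chif, Prod.ext_iff, ha1, hG0]
      · by_cases e1 : v = v1
        · subst e1; simp [chif, h01.symm, Prod.ext_iff, hb1, hG1]
        · by_cases e2 : v = v2
          · subst e2; simp [chif, h02.symm, h12.symm, Prod.ext_iff, ha2, hG2]
          · by_cases e3 : v = v3
            · subst e3; simp [chif, h03.symm, h13.symm, h23.symm, Prod.ext_iff, hb2, hG3]
            · have o1 := hoth1 v e0 e1
              have o2 := hoth2 v e2 e3
              simp [chif, e0, e1, e2, e3, o1.1, o1.2, o2.1, o2.2]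
    rw [this, one_mul]
  · rw [Set.indicator_of_notMem h]
    by_cases hall : ∀ v, chif c0 v0 v1 v2 v3 v (ω v) = 1
    · exfalso
      apply h
      have e0 : ω v0 = (c0, ({v1} : Finset (Fin n))) := by
        have := hall v0; simp only [chif, if_pos rfl] at this
        by_contra hc; rw [if_neg hc] at this; exact zero_ne_one this
      have e1 : ω v1 = (c0, ({v0} : Finset (Fin n))) := by
        have := hall v1; simp only [chif, if_neg h01.symm, if_pos rfl] at this
        by_contra hc; rw [if_neg hc] at this; exact zero_ne_one this
      have e2 : ω v2 = (c0, ({v3} : Finset (Fin n))) := by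
        have := hall v2; simp only [chif, if_neg h02.symm, if_neg h12.symm, if_pos rfl] at this
        by_contra hc; rw [if_neg hc] at this; exact zero_ne_one this
      have e3 : ω v3 = (c0, ({v2} : Finset (Fin n))) := by
        have := hall v3; simp only [chif, if_neg h03.symm, if_neg h13.symm,
          if_neg h23.symm, if_pos rfl] at this
        by_contra hc; rw [if_neg hc] at this; exact zero_ne_one this
      have egen : ∀ v, v ≠ v0 → v ≠ v1 → v ≠ v2 → v ≠ v3 →
          v0 ∉ (ω v).2 ∧ v1 ∉ (ω v).2 ∧ v2 ∉ (ω v).2 ∧ v3 ∉ (ω v).2 := by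
        intro v hv0 hv1 hv2 hv3
        have := hall v
        simp only [chif, if_neg hv0, if_neg hv1, if_neg hv2, if_neg hv3] at this
        by_contra hc; rw [if_neg hc] at this; exact zero_ne_one this
      constructor
      · refine ⟨by rw [e0], by rw [e1], by rw [e0], by rw [e1], ?_⟩
        intro v hv0 hv1
        by_cases hv2 : v = v2
        · subst hv2; rw [e2]; simp [h03, h13]
        · by_cases hv3 : v = v3
          · subst hv3; rw [e3]; simp [h02, h12]
          · exact ⟨(egen v hv0 hv1 hv2 hv3).1, (egen v hv0 hv1 hv2 hv3).2.1⟩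
      · refine ⟨by rw [e2], by rw [e3], by rw [e2], by rw [e3], ?_⟩
        intro v hv2 hv3
        by_cases hv0 : v = v0
        · subst hv0; rw [e0]; simp [Ne.symm h12, Ne.symm h13]
        · by_cases hv1 : v = v1
          · subst hv1; rw [e1]; simp [Ne.symm h02, Ne.symm h03]
          · exact ⟨(egen v hv0 hv1 hv2 hv3).2.2.1, (egen v hv0 hv1 hv2 hv3).2.2.2⟩
    · push_neg at hall
      obtain ⟨v, hv⟩ := hall
      have hz : chif c0 v0 v1 v2 v3 v (ω v) = 0 := by
        unfold chif at hv ⊢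
        split_ifs at hv ⊢ <;> simp_all
      rw [Finset.prod_eq_zero (Finset.mem_univ v) hz, zero_mul]

/-- With `K₁ = 1` and `n ≥ 5`, the probability of the joint event
`U_{12} ∩ U_{34}` equals `μ₁⁴ (1/(n−1))⁴ ( ∑ i, μ i C(n−5, K i)/C(n−1, K i) )^{n−4}`. -/
theorem prob_U12_U34
    (r : ℕ) (hr : 1 ≤ r) (μ : Fin r → ℝ)
    (hμ : ∀ i, 0 < μ i) (hsum : ∑ i, μ i = 1)
    (c0 : Fin r) (hc0 : (c0 : ℕ) = 0)
    (n : ℕ) (hn : 5 ≤ n)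
    (K : Fin r → ℕ) (hmono : Monotone K) (hone : ∀ i, 1 ≤ K i) (hlt : ∀ i, K i < n)
    (hK1 : K c0 = 1)
    (v0 v1 v2 v3 : Fin n)
    (hv0 : (v0 : ℕ) = 0) (hv1 : (v1 : ℕ) = 1) (hv2 : (v2 : ℕ) = 2) (hv3 : (v3 : ℕ) = 3) :
    Pr n μ K (Uevent c0 v0 v1 ∩ Uevent c0 v2 v3) =
      (μ c0) ^ 4 * (1 / ((n : ℝ) - 1)) ^ 4 *
        (∑ i, μ i * ((n - 5).choose (K i) : ℝ) / ((n - 1).choose (K i) : ℝ)) ^ (n - 4) := by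
  classical
  have h01 : v0 ≠ v1 := by simp [Fin.ext_iff, hv0, hv1]
  have h02 : v0 ≠ v2 := by simp [Fin.ext_iff, hv0, hv2]
  have h03 : v0 ≠ v3 := by simp [Fin.ext_iff, hv0, hv3]
  have h12 : v1 ≠ v2 := by simp [Fin.ext_iff, hv1, hv2]
  have h13 : v1 ≠ v3 := by simp [Fin.ext_iff, hv1, hv3]
  have h23 : v2 ≠ v3 := by simp [Fin.ext_iff, hv2, hv3]
  have hn1 : 1 ≤ n := by omega
  rw [Pr]
  simp only [indicator_fact μ K c0 v0 v1 v2 v3 h01 h02 h03 h12 h13 h23]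
  have hexch : (∑ ω : Config n r, ∏ v, chif c0 v0 v1 v2 v3 v (ω v) * wfun n μ K v (ω v))
      = ∏ v, ∑ p : Fin r × Finset (Fin n), chif c0 v0 v1 v2 v3 v p * wfun n μ K v p := by
    rw [← Fintype.piFinset_univ, ← Finset.prod_univ_sum
      (f := fun v p => chif c0 v0 v1 v2 v3 v p * wfun n μ K v p)]
  rw [hexch]
  set F : ℝ := ∑ i, μ i * ((n - 5).choose (K i) : ℝ) / ((n - 1).choose (K i) : ℝ) with hF
  set A : Finset (Fin n) := {v0, v1, v2, v3} with hA
  have hAcard : A.card = 4 := by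
    rw [hA, Finset.card_insert_of_notMem (by simp [h01, h02, h03]),
      Finset.card_insert_of_notMem (by simp [h12, h13]),
      Finset.card_insert_of_notMem (by simp [h23]), Finset.card_singleton]
  rw [← Finset.prod_sdiff (Finset.subset_univ A)]
  have hspec : ∀ v ∈ A,
      (∑ p : Fin r × Finset (Fin n), chif c0 v0 v1 v2 v3 v p * wfun n μ K v p)
        = μ c0 / ((n : ℝ) - 1) := by
    intro v hv
    rw [hA] at hv
    simp only [Finset.mem_insert, Finset.mem_singleton] at hv
    rcases hv with rfl | rfl | rfl | rfl
    · simp only [chif, if_pos rfl]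
      exact factor_special μ K c0 v v1 h01 hK1 hn1
    · simp only [chif, if_neg h01.symm, if_pos rfl]
      exact factor_special μ K c0 v v0 h01.symm hK1 hn1
    · simp only [chif, if_neg h02.symm, if_neg h12.symm, if_pos rfl]
      exact factor_special μ K c0 v v3 h23 hK1 hn1
    · simp only [chif, if_neg h03.symm, if_neg h13.symm, if_neg h23.symm, if_pos rfl]
      exact factor_special μ K c0 v v2 h23.symm hK1 hn1
  have hgen : ∀ v ∈ univ \ A,
      (∑ p : Fin r × Finset (Fin n), chif c0 v0 v1 v2 v3 v p * wfun n μ K v p) = F := by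
    intro v hv
    rw [Finset.mem_sdiff, hA] at hv
    simp only [Finset.mem_insert, Finset.mem_singleton, not_or] at hv
    obtain ⟨-, hne0, hne1, hne2, hne3⟩ := hv
    have hcard5 : ({v0, v1, v2, v3, v} : Finset (Fin n)).card = 5 := by
      rw [Finset.card_insert_of_notMem (by simp [h01, h02, h03, Ne.symm hne0]),
        Finset.card_insert_of_notMem (by simp [h12, h13, Ne.symm hne1]),
        Finset.card_insert_of_notMem (by simp [h23, Ne.symm hne2]),
        Finset.card_insert_of_notMem (by simp [Ne.symm hne3]), Finset.card_singleton]
    simp only [chif, if_neg hne0, if_neg hne1, if_neg hne2, if_neg hne3]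
    exact factor_generic μ K v0 v1 v2 v3 v hcard5
  rw [Finset.prod_congr rfl hspec, Finset.prod_congr rfl hgen,
    Finset.prod_const, Finset.prod_const, hAcard,
    Finset.card_sdiff_of_subset (Finset.subset_univ A), Finset.card_univ, Fintype.card_fin, hAcard]
  ring
end
end

section
/- Fix r ≥ 2 and μ with μ_i > 0 for all i. Let K : ℕ → ℕ^r be a scaling with K_{1,n} = 1 for all n and K_{r,n} = O(1). Then E[χ_{12}(n; μ, K_n) χ_{34}(n; μ, K_n)] / (E[χ_{12}(n; μ, K_n)])² = 1 + o(1), i.e., this ratio tends to 1 as n → ∞. -/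
open Finset Filter

noncomputable section

-- factorization helpers
lemma ite_forall_prod {ι : Type*} [Fintype ι] (P : ι → Prop) [DecidablePred P] (f : ι → ℝ) :
    (if (∀ v, P v) then ∏ v, f v else 0) = ∏ v, if P v then f v else 0 := by
  by_cases h : ∀ v, P v
  · rw [if_pos h]
    exact Finset.prod_congr rfl fun v _ => (if_pos (h v)).symm
  · rw [if_neg h, eq_comm]
    push_neg at h
    obtain ⟨v, hv⟩ := h
    exact Finset.prod_eq_zero (mem_univ v) (if_neg hv)

lemma sum_config_prod {n r : ℕ} (g : Fin n → (Fin r × Finset (Fin n)) → ℝ) :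
    ∑ ω : Config n r, ∏ v, g v (ω v) = ∏ v, ∑ a, g v a := by
  rw [Finset.prod_univ_sum (fun _ => (univ : Finset (Fin r × Finset (Fin n)))) g]
  rw [Fintype.piFinset_univ]
/-- per-vertex weight -/
noncomputable def pw {r : ℕ} (n : ℕ) (μ : Fin r → ℝ) (K : Fin r → ℕ)
    (v : Fin n) (a : Fin r × Finset (Fin n)) : ℝ :=
  if a.2.card = K a.1 ∧ v ∉ a.2 then μ a.1 / ((n - 1).choose (K a.1) : ℝ) else 0

lemma wt_eq_prod {r n : ℕ} (μ : Fin r → ℝ) (K : Fin r → ℕ) (ω : Config n r) :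
    wt n μ K ω = ∏ v, pw n μ K v (ω v) := rfl

lemma factorize {r n : ℕ} (μ : Fin r → ℝ) (K : Fin r → ℕ)
    (P : Fin n → (Fin r × Finset (Fin n)) → Prop) [∀ v a, Decidable (P v a)] :
    Pr n μ K {ω | ∀ v, P v (ω v)} =
      ∏ v, ∑ a, if P v a then pw n μ K v a else 0 := by
  classical
  rw [Pr, ← sum_config_prod]
  refine Finset.sum_congr rfl fun ω _ => ?_
  rw [Set.indicator_apply, wt_eq_prod]
  rw [← ite_forall_prod (fun v => P v (ω v)) (fun v => pw n μ K v (ω v))]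
  congr 1

/-- per-vertex predicate for Uevent -/
def Pu {r n : ℕ} (c : Fin r) (i j : Fin n) (v : Fin n)
    (a : Fin r × Finset (Fin n)) : Prop :=
  if v = i then a.1 = c ∧ a.2 = {j}
  else if v = j then a.1 = c ∧ a.2 = {i}
  else i ∉ a.2 ∧ j ∉ a.2

instance {r n : ℕ} (c : Fin r) (i j v : Fin n) :
    DecidablePred (Pu c i j v) := fun a => by unfold Pu; infer_instance

lemma Uevent_eq {r n : ℕ} (c : Fin r) (i j : Fin n) (hij : i ≠ j) :
    Uevent c i j = {ω : Config n r | ∀ v, Pu c i j v (ω v)} := by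
  ext ω
  simp only [Uevent, Set.mem_setOf_eq]
  constructor
  · rintro ⟨h1, h2, h3, h4, h5⟩ v
    unfold Pu
    by_cases hvi : v = i
    · subst hvi; simp [h1, h3]
    · by_cases hvj : v = j
      · subst hvj
        rw [if_neg hvi, if_pos rfl]
        exact ⟨h2, h4⟩
      · simp [hvi, hvj]; exact h5 v hvi hvj
  · intro h
    have hi := h i; have hj := h j
    unfold Pu at hi hj
    rw [if_pos rfl] at hi
    rw [if_neg (Ne.symm hij), if_pos rfl] at hj
    refine ⟨hi.1, hj.1, hi.2, hj.2, fun l hli hlj => ?_⟩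
    have := h l
    unfold Pu at this
    rw [if_neg hli, if_neg hlj] at this
    exact this

lemma Uevent_inter_eq {r n : ℕ} (c : Fin r) (i j k l : Fin n)
    (hij : i ≠ j) (hkl : k ≠ l) :
    Uevent c i j ∩ Uevent c k l =
      {ω : Config n r | ∀ v, Pu c i j v (ω v) ∧ Pu c k l v (ω v)} := by
  rw [Uevent_eq c i j hij, Uevent_eq c k l hkl]
  ext ω
  simp only [Set.mem_inter_iff, Set.mem_setOf_eq, forall_and]
lemma sum_pin {r n : ℕ} (μ : Fin r → ℝ) (K : Fin r → ℕ) (c : Fin r)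
    (v j : Fin n) (hvj : v ≠ j) (hK : K c = 1) :
    ∑ a : Fin r × Finset (Fin n),
      (if a = (c, ({j} : Finset (Fin n))) then pw n μ K v a else 0)
      = μ c / ((n - 1 : ℕ) : ℝ) := by
  classical
  rw [Finset.sum_ite_eq' univ (c, ({j} : Finset (Fin n))) (pw n μ K v),
    if_pos (mem_univ _)]
  show (if ({j} : Finset (Fin n)).card = K c ∧ v ∉ ({j} : Finset (Fin n)) then
      μ c / ((n - 1).choose (K c) : ℝ) else 0) = _
  rw [if_pos ⟨by simp [hK], by simp [hvj]⟩, hK, Nat.choose_one_right]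

lemma sum_avoid {r n : ℕ} (μ : Fin r → ℝ) (K : Fin r → ℕ)
    (v : Fin n) (T : Finset (Fin n)) (hv : v ∉ T) :
    ∑ a : Fin r × Finset (Fin n),
      (if (∀ u ∈ T, u ∉ a.2) then pw n μ K v a else 0)
      = ∑ cls, μ cls *
          (((n - 1 - T.card).choose (K cls) : ℝ) / (((n - 1).choose (K cls) : ℝ))) := by
  classical
  rw [Fintype.sum_prod_type]
  refine Finset.sum_congr rfl fun cls _ => ?_
  have key : ∀ S : Finset (Fin n),
      (if (∀ u ∈ T, u ∉ S) then pw n μ K v (cls, S) else 0)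
      = if S ∈ (univ \ insert v T).powersetCard (K cls) then
          μ cls / ((n - 1).choose (K cls) : ℝ) else 0 := by
    intro S
    have hmem : S ∈ (univ \ insert v T).powersetCard (K cls) ↔
        ((∀ u ∈ T, u ∉ S) ∧ (S.card = K cls ∧ v ∉ S)) := by
      rw [Finset.mem_powersetCard]
      constructor
      · rintro ⟨hsub, hcard⟩
        refine ⟨fun u hu hus => ?_, hcard, fun hvs => ?_⟩
        · have := hsub hus
          simp [Finset.mem_sdiff, Finset.mem_insert] at this
          exact this.2 hu
        · have := hsub hvs
          simp [Finset.mem_sdiff, Finset.mem_insert] at this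
      · rintro ⟨hT, hcard, hvS⟩
        refine ⟨fun x hx => ?_, hcard⟩
        simp only [Finset.mem_sdiff, Finset.mem_univ, Finset.mem_insert, true_and]
        push_neg
        exact ⟨fun hxv => hvS (hxv ▸ hx), fun hxT => hT x hxT hx⟩
    by_cases h1 : ∀ u ∈ T, u ∉ S
    · by_cases h2 : S.card = K cls ∧ v ∉ S
      · rw [if_pos h1, if_pos (hmem.mpr ⟨h1, h2⟩)]
        show (if S.card = K cls ∧ v ∉ S then _ else _) = _
        rw [if_pos h2]
      · rw [if_pos h1, if_neg (fun hm => h2 (hmem.mp hm).2)]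
        show (if S.card = K cls ∧ v ∉ S then _ else _) = _
        rw [if_neg h2]
    · rw [if_neg h1, if_neg (fun hm => h1 (hmem.mp hm).1)]
  rw [Finset.sum_congr rfl fun S _ => key S]
  rw [Finset.sum_ite_mem]
  rw [Finset.univ_inter, Finset.sum_const, Finset.card_powersetCard]
  have hcard : (univ \ insert v T).card = n - 1 - T.card := by
    rw [Finset.card_sdiff_of_subset (Finset.subset_univ _), Finset.card_univ,
      Fintype.card_fin, Finset.card_insert_of_notMem hv]
    omega
  rw [hcard, nsmul_eq_mul]
  ring
noncomputable def qq {r : ℕ} (μ : Fin r → ℝ) (K : Fin r → ℕ) (n t : ℕ) : ℝ :=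
  ∑ cls, μ cls * (((n - 1 - t).choose (K cls) : ℝ) / ((n - 1).choose (K cls) : ℝ))

lemma Pr_U {r n : ℕ} (μ : Fin r → ℝ) (K : Fin r → ℕ) (c : Fin r)
    (i j : Fin n) (hij : i ≠ j) (hK : K c = 1) :
    Pr n μ K (Uevent c i j)
      = (μ c / ((n - 1 : ℕ) : ℝ)) ^ 2 * (qq μ K n 2) ^ (n - 2) := by
  classical
  rw [Uevent_eq c i j hij, factorize]
  rw [← Finset.prod_mul_prod_compl ({i, j} : Finset (Fin n))]
  have Fi : (∑ a, if Pu c i j i a then pw n μ K i a else 0) = μ c / ((n - 1 : ℕ) : ℝ) := by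
    have hiff : ∀ a : Fin r × Finset (Fin n), Pu c i j i a ↔ a = (c, {j}) := by
      intro a
      unfold Pu
      rw [if_pos rfl, Prod.ext_iff]
    rw [Finset.sum_congr rfl fun a _ => if_congr (hiff a) rfl rfl]
    exact sum_pin μ K c i j hij hK
  have Fj : (∑ a, if Pu c i j j a then pw n μ K j a else 0) = μ c / ((n - 1 : ℕ) : ℝ) := by
    have hiff : ∀ a : Fin r × Finset (Fin n), Pu c i j j a ↔ a = (c, {i}) := by
      intro a
      unfold Pu
      rw [if_neg (Ne.symm hij), if_pos rfl, Prod.ext_iff]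
    rw [Finset.sum_congr rfl fun a _ => if_congr (hiff a) rfl rfl]
    exact sum_pin μ K c j i (Ne.symm hij) hK
  have Fo : ∀ v : Fin n, v ∉ ({i, j} : Finset (Fin n)) →
      (∑ a, if Pu c i j v a then pw n μ K v a else 0) = qq μ K n 2 := by
    intro v hv
    simp only [Finset.mem_insert, Finset.mem_singleton, not_or] at hv
    have hiff : ∀ a : Fin r × Finset (Fin n),
        Pu c i j v a ↔ (∀ u ∈ ({i, j} : Finset (Fin n)), u ∉ a.2) := by
      intro a
      unfold Pu
      rw [if_neg hv.1, if_neg hv.2]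
      simp only [Finset.mem_insert, Finset.mem_singleton]
      constructor
      · rintro ⟨h1, h2⟩ u hu
        rcases hu with h | h
        · exact h ▸ h1
        · exact h ▸ h2
      · intro h
        exact ⟨h i (Or.inl rfl), h j (Or.inr rfl)⟩
    rw [Finset.sum_congr rfl fun a _ => if_congr (hiff a) rfl rfl]
    rw [sum_avoid μ K v {i, j} (by simp only [Finset.mem_insert, Finset.mem_singleton, not_or]; exact hv)]
    have hc2 : ({i, j} : Finset (Fin n)).card = 2 := by
      rw [Finset.card_insert_of_notMem (by simpa using hij), Finset.card_singleton]
    rw [hc2, qq]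
  have h1 : (∏ v ∈ ({i, j} : Finset (Fin n)),
      ∑ a, if Pu c i j v a then pw n μ K v a else 0) = (μ c / ((n - 1 : ℕ) : ℝ)) ^ 2 := by
    rw [Finset.prod_insert (by simpa using hij), Finset.prod_singleton, Fi, Fj, sq]
  have h2 : (∏ v ∈ (({i, j} : Finset (Fin n)))ᶜ,
      ∑ a, if Pu c i j v a then pw n μ K v a else 0) = (qq μ K n 2) ^ (n - 2) := by
    rw [Finset.prod_congr rfl fun v hv => Fo v (Finset.mem_compl.mp hv), Finset.prod_const,
      Finset.card_compl, Fintype.card_fin,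
      Finset.card_insert_of_notMem (by simpa using hij), Finset.card_singleton]
  rw [h1, h2]
lemma sum_pin2 {r n : ℕ} (μ : Fin r → ℝ) (K : Fin r → ℕ) (c : Fin r)
    (v tgt x y : Fin n) (hvt : v ≠ tgt) (hxt : x ≠ tgt) (hyt : y ≠ tgt) (hK : K c = 1)
    (P : Fin r × Finset (Fin n) → Prop) [DecidablePred P]
    (hP : ∀ a, P a ↔ ((a.1 = c ∧ a.2 = {tgt}) ∧ (x ∉ a.2 ∧ y ∉ a.2))) :
    ∑ a : Fin r × Finset (Fin n), (if P a then pw n μ K v a else 0)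
      = μ c / ((n - 1 : ℕ) : ℝ) := by
  classical
  have hiff : ∀ a : Fin r × Finset (Fin n), P a ↔ a = (c, {tgt}) := by
    intro a
    rw [hP]
    constructor
    · rintro ⟨⟨h1, h2⟩, -⟩
      exact Prod.ext_iff.mpr ⟨h1, h2⟩
    · rintro rfl
      exact ⟨⟨rfl, rfl⟩, by simp [hxt], by simp [hyt]⟩
  rw [Finset.sum_congr rfl fun a _ => if_congr (hiff a) rfl rfl]
  exact sum_pin μ K c v tgt hvt hK

lemma Pr_UU {r n : ℕ} (μ : Fin r → ℝ) (K : Fin r → ℕ) (c : Fin r)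
    (i j k l : Fin n) (hij : i ≠ j) (hik : i ≠ k) (hil : i ≠ l)
    (hjk : j ≠ k) (hjl : j ≠ l) (hkl : k ≠ l) (hK : K c = 1) :
    Pr n μ K (Uevent c i j ∩ Uevent c k l)
      = (μ c / ((n - 1 : ℕ) : ℝ)) ^ 4 * (qq μ K n 4) ^ (n - 4) := by
  classical
  rw [Uevent_inter_eq c i j k l hij hkl,
    factorize μ K (fun v a => Pu c i j v a ∧ Pu c k l v a)]
  rw [← Finset.prod_mul_prod_compl ({i, j, k, l} : Finset (Fin n))]
  set F : Fin n → ℝ := fun v =>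
    ∑ a, if Pu c i j v a ∧ Pu c k l v a then pw n μ K v a else 0 with hF
  have w := μ c / ((n - 1 : ℕ) : ℝ)
  have Fi : F i = μ c / ((n - 1 : ℕ) : ℝ) := by
    refine sum_pin2 μ K c i j k l hij (Ne.symm hjk) (Ne.symm hjl) hK _ fun a => ?_
    unfold Pu
    rw [if_pos rfl, if_neg hik, if_neg hil]
  have Fj : F j = μ c / ((n - 1 : ℕ) : ℝ) := by
    refine sum_pin2 μ K c j i k l (Ne.symm hij) (Ne.symm hik) (Ne.symm hil) hK _ fun a => ?_
    unfold Pu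
    rw [if_neg (Ne.symm hij), if_pos rfl, if_neg hjk, if_neg hjl]
  have Fk : F k = μ c / ((n - 1 : ℕ) : ℝ) := by
    refine sum_pin2 μ K c k l i j hkl hil hjl hK _ fun a => ?_
    unfold Pu
    rw [if_neg (Ne.symm hik), if_neg (Ne.symm hjk), if_pos rfl]
    exact and_comm
  have Fl : F l = μ c / ((n - 1 : ℕ) : ℝ) := by
    refine sum_pin2 μ K c l k i j (Ne.symm hkl) hik hjk hK _ fun a => ?_
    unfold Pu
    rw [if_neg (Ne.symm hil), if_neg (Ne.symm hjl), if_neg (Ne.symm hkl), if_pos rfl]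
    exact and_comm
  have Fo : ∀ v : Fin n, v ∉ ({i, j, k, l} : Finset (Fin n)) → F v = qq μ K n 4 := by
    intro v hv
    simp only [Finset.mem_insert, Finset.mem_singleton, not_or] at hv
    obtain ⟨hvi, hvj, hvk, hvl⟩ := hv
    have hiff : ∀ a : Fin r × Finset (Fin n),
        (Pu c i j v a ∧ Pu c k l v a) ↔
          (∀ u ∈ ({i, j, k, l} : Finset (Fin n)), u ∉ a.2) := by
      intro a
      unfold Pu
      rw [if_neg hvi, if_neg hvj, if_neg hvk, if_neg hvl]
      simp only [Finset.mem_insert, Finset.mem_singleton]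
      constructor
      · rintro ⟨⟨h1, h2⟩, h3, h4⟩ u hu
        rcases hu with h | h | h | h
        · exact h ▸ h1
        · exact h ▸ h2
        · exact h ▸ h3
        · exact h ▸ h4
      · intro h
        exact ⟨⟨h i (by tauto), h j (by tauto)⟩, h k (by tauto), h l (by tauto)⟩
    show (∑ a : Fin r × Finset (Fin n),
      if Pu c i j v a ∧ Pu c k l v a then pw n μ K v a else 0) = qq μ K n 4
    rw [Finset.sum_congr rfl fun a _ => if_congr (hiff a) rfl rfl]
    rw [sum_avoid μ K v {i, j, k, l}
      (by simp only [Finset.mem_insert, Finset.mem_singleton, not_or]; exact ⟨hvi, hvj, hvk, hvl⟩)]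
    have hc4 : ({i, j, k, l} : Finset (Fin n)).card = 4 := by
      rw [Finset.card_insert_of_notMem (by simp [hij, hik, hil]),
        Finset.card_insert_of_notMem (by simp [hjk, hjl]),
        Finset.card_insert_of_notMem (by simp [hkl]), Finset.card_singleton]
    rw [hc4, qq]
  have h1 : (∏ v ∈ ({i, j, k, l} : Finset (Fin n)), F v)
      = (μ c / ((n - 1 : ℕ) : ℝ)) ^ 4 := by
    rw [Finset.prod_insert (by simp [hij, hik, hil]),
      Finset.prod_insert (by simp [hjk, hjl]),
      Finset.prod_insert (by simp [hkl]), Finset.prod_singleton,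
      Fi, Fj, Fk, Fl]
    ring
  have h2 : (∏ v ∈ (({i, j, k, l} : Finset (Fin n)))ᶜ, F v) = (qq μ K n 4) ^ (n - 4) := by
    rw [Finset.prod_congr rfl fun v hv => Fo v (Finset.mem_compl.mp hv), Finset.prod_const,
      Finset.card_compl, Fintype.card_fin]
    congr 1
    rw [Finset.card_insert_of_notMem (by simp [hij, hik, hil]),
      Finset.card_insert_of_notMem (by simp [hjk, hjl]),
      Finset.card_insert_of_notMem (by simp [hkl]), Finset.card_singleton]
  rw [h1, h2]

noncomputable def aR (t x : ℝ) : ℝ := ((t+4-x)*(t+3-x))/((t+4)*(t+3))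
noncomputable def bR (t x : ℝ) : ℝ := ((t+2-x)*(t+1-x))/((t+2)*(t+1))

lemma cast_step (s k a : ℕ) (hk : k ≤ a) :
    ((a.choose k : ℝ)) * ((a : ℝ) + 1) = (((a+1).choose k : ℝ)) * ((a : ℝ) + 1 - k) := by
  have h := Nat.choose_mul_succ_eq a k
  have hc := congrArg (fun x : ℕ => (x : ℝ)) h
  push_cast [Nat.cast_sub (show k ≤ a + 1 by omega)] at hc
  linear_combination hc

lemma choose_ratio2 (s k : ℕ) (hk : k ≤ s) :
    ((s+2).choose k : ℝ) / ((s+4).choose k : ℝ)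
      = (((s:ℝ)+4-k)*((s:ℝ)+3-k))/(((s:ℝ)+4)*((s:ℝ)+3)) := by
  have st2 := cast_step s k (s+2) (by omega)
  have st3 := cast_step s k (s+3) (by omega)
  push_cast at st2 st3
  have h4 : (0:ℝ) < ((s+4).choose k : ℝ) := by
    exact_mod_cast Nat.choose_pos (by omega : k ≤ s + 4)
  rw [div_eq_div_iff h4.ne' (by positivity)]
  have e2 : ((s:ℝ)+2+1) = (s:ℝ)+3 := by ring
  have e3 : ((s:ℝ)+3+1) = (s:ℝ)+4 := by ring
  have e2' : ((s+2+1 : ℕ)) = s+3 := by omega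
  have e3' : ((s+3+1 : ℕ)) = s+4 := by omega
  rw [e2', e2] at st2
  rw [e3', e3] at st3
  linear_combination ((s:ℝ)+4) * st2 + ((s:ℝ)+3-(k:ℝ)) * st3

lemma choose_ratio4 (s k : ℕ) (hk : k ≤ s) :
    ((s).choose k : ℝ) / ((s+4).choose k : ℝ)
      = aR (s:ℝ) (k:ℝ) * bR (s:ℝ) (k:ℝ) := by
  have st0 := cast_step s k s (by omega)
  have st1 := cast_step s k (s+1) (by omega)
  have st2 := cast_step s k (s+2) (by omega)
  have st3 := cast_step s k (s+3) (by omega)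
  push_cast at st0 st1 st2 st3
  have h4 : (0:ℝ) < ((s+4).choose k : ℝ) := by
    exact_mod_cast Nat.choose_pos (by omega : k ≤ s + 4)
  rw [aR, bR, div_mul_div_comm, div_eq_div_iff h4.ne' (by positivity)]
  have e0' : ((s+0+1 : ℕ)) = s+1 := by omega
  have e1' : ((s+1+1 : ℕ)) = s+2 := by omega
  have e2' : ((s+2+1 : ℕ)) = s+3 := by omega
  have e3' : ((s+3+1 : ℕ)) = s+4 := by omega
  rw [e1'] at st1
  rw [e2'] at st2
  rw [e3'] at st3
  linear_combination (((s:ℝ)+2)*((s:ℝ)+3)*((s:ℝ)+4)) * st0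
    + (((s:ℝ)+1-(k:ℝ))*((s:ℝ)+3)*((s:ℝ)+4)) * st1
    + (((s:ℝ)+1-(k:ℝ))*((s:ℝ)+2-(k:ℝ))*((s:ℝ)+4)) * st2
    + (((s:ℝ)+1-(k:ℝ))*((s:ℝ)+2-(k:ℝ))*((s:ℝ)+3-(k:ℝ))) * st3

section scalar
variable {t x Bv : ℝ} (hx0 : 0 ≤ x) (hxB : x ≤ Bv) (hB1 : 1 ≤ Bv) (ht : 7*Bv + 7 ≤ t)

include hx0 hxB hB1 ht

lemma aR_nonneg : 0 ≤ aR t x := by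
  have : x ≤ t := by nlinarith
  apply div_nonneg (by nlinarith) (by nlinarith)

lemma aR_le_one : aR t x ≤ 1 := by
  rw [aR, div_le_one (by nlinarith)]
  nlinarith

lemma bR_nonneg : 0 ≤ bR t x := by
  have : x ≤ t := by nlinarith
  apply div_nonneg (by nlinarith) (by nlinarith)

lemma bR_le_one : bR t x ≤ 1 := by
  rw [bR, div_le_one (by nlinarith)]
  nlinarith

lemma aR_lb : 1 - 3*Bv/t ≤ aR t x := by
  have ht0 : (0:ℝ) < t := by nlinarith
  have hx_t : t*(2*t+7)*x ≤ t*(2*t+7)*Bv :=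
    mul_le_mul_of_nonneg_left hxB (by positivity)
  have key : (t - 3*Bv) * ((t+4)*(t+3)) ≤ ((t+4-x)*(t+3-x)) * t := by
    nlinarith [mul_nonneg (mul_nonneg ht0.le hx0) hx0, hx_t, mul_pos ht0 ht0,
      mul_nonneg (le_trans zero_le_one hB1) (mul_pos ht0 ht0).le,
      mul_nonneg (le_trans zero_le_one hB1) ht0.le]
  have h1 : (t - 3*Bv)/t ≤ aR t x := by
    rw [aR, div_le_div_iff₀ ht0 (by nlinarith)]
    nlinarith
  calc 1 - 3*Bv/t = (t - 3*Bv)/t := by field_simp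
    _ ≤ aR t x := h1

lemma sub_bR_le : aR t x - bR t x ≤ 46*Bv/t^2 ∧ 0 ≤ aR t x - bR t x := by
  have ht0 : (0:ℝ) < t := by nlinarith
  have key : aR t x - bR t x
      = (x*(4*t^2+20*t+22) - x^2*(4*t+10)) / ((t+1)*(t+2)*(t+3)*(t+4)) := by
    rw [aR, bR]
    field_simp
    ring
  constructor
  · rw [key]
    have hnum : x*(4*t^2+20*t+22) - x^2*(4*t+10) ≤ 46*Bv*t^2 := by nlinarith
    have hden : t^4 ≤ (t+1)*(t+2)*(t+3)*(t+4) := by nlinarith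
    calc (x*(4*t^2+20*t+22) - x^2*(4*t+10)) / ((t+1)*(t+2)*(t+3)*(t+4))
        ≤ (46*Bv*t^2) / t^4 := by
          apply div_le_div₀ (by positivity) hnum (by positivity) hden
      _ = 46*Bv/t^2 := by
          field_simp
  · rw [key]
    apply div_nonneg _ (by nlinarith)
    have h1 : x*(4*t+10) ≤ Bv*(4*t+10) := by nlinarith
    have h2 : Bv*(4*t+10) ≤ 4*t^2+20*t+22 := by nlinarith
    nlinarith [mul_le_mul_of_nonneg_left (h1.trans h2) hx0]

end scalar

lemma pair_bound (a1 a2 b1 b2 ε δ : ℝ) (h1 : |b1 - a1| ≤ δ) (h2 : |b2 - a2| ≤ δ)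
    (ha1 : |a1| ≤ 1) (ha2 : |a2| ≤ 1) (h12 : |a1 - a2| ≤ ε) :
    |(a1*b1 + a2*b2)/2 - a1*a2| ≤ δ + ε^2 := by
  have key : (a1*b1+a2*b2)/2 - a1*a2
      = (a1*(b1-a1))/2 + (a2*(b2-a2))/2 + (a1-a2)^2/2 := by ring
  rw [key]
  have e1 : |a1*(b1-a1)| ≤ δ := by
    rw [abs_mul]
    calc |a1| * |b1-a1| ≤ 1 * δ :=
      mul_le_mul ha1 h1 (abs_nonneg _) zero_le_one
    _ = δ := one_mul δ
  have e2 : |a2*(b2-a2)| ≤ δ := by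
    rw [abs_mul]
    calc |a2| * |b2-a2| ≤ 1 * δ :=
      mul_le_mul ha2 h2 (abs_nonneg _) zero_le_one
    _ = δ := one_mul δ
  have e3 : |(a1-a2)^2| ≤ ε^2 := by
    rw [abs_of_nonneg (sq_nonneg _), ← sq_abs]
    exact pow_le_pow_left₀ (abs_nonneg _) h12 2
  calc |(a1*(b1-a1))/2 + (a2*(b2-a2))/2 + (a1-a2)^2/2|
      ≤ |(a1*(b1-a1))/2 + (a2*(b2-a2))/2| + |(a1-a2)^2/2| := abs_add_le _ _
    _ ≤ (|a1*(b1-a1)/2| + |a2*(b2-a2)/2|) + |(a1-a2)^2/2| := by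
        gcongr
        exact abs_add_le _ _
    _ ≤ (δ/2 + δ/2) + ε^2/2 := by
        rw [abs_div, abs_div, abs_div]
        simp only [abs_two]
        gcongr
    _ ≤ δ + ε^2 := by nlinarith [sq_nonneg ε, abs_nonneg (b1-a1), h1]

lemma sum_bound {r : ℕ} (μ a b : Fin r → ℝ) (ε δ : ℝ)
    (hε : 0 ≤ ε) (hδ : 0 ≤ δ)
    (hμ0 : ∀ i, 0 ≤ μ i) (hμ1 : ∑ i, μ i = 1)
    (ha : ∀ i, |a i| ≤ 1) (hab : ∀ i, |b i - a i| ≤ δ)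
    (haa : ∀ i j, |a i - a j| ≤ ε) :
    |(∑ i, μ i * (a i * b i)) - (∑ i, μ i * a i)^2| ≤ δ + ε^2 := by
  have hq : (∑ i, μ i * a i)^2 = ∑ i, ∑ j, μ i * a i * (μ j * a j) := by
    rw [sq, Finset.sum_mul_sum]
  have hp1 : ∑ i, ∑ j, (μ i * (a i * b i)) * μ j = ∑ i, μ i * (a i * b i) := by
    rw [← Finset.sum_mul_sum, hμ1, mul_one]
  have hp2 : ∑ i, ∑ j, μ i * (μ j * (a j * b j)) = ∑ i, μ i * (a i * b i) := by
    simp_rw [← Finset.mul_sum]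
    rw [← Finset.sum_mul, hμ1, one_mul]
  have key : (∑ i, μ i * (a i * b i)) - (∑ i, μ i * a i)^2
      = ∑ i, ∑ j, μ i * μ j * ((a i * b i + a j * b j)/2 - a i * a j) := by
    have h1 : ∀ i j : Fin r, μ i * μ j * ((a i * b i + a j * b j)/2 - a i * a j)
        = ((μ i * (a i * b i)) * μ j)/2 + (μ i * (μ j * (a j * b j)))/2
          - μ i * a i * (μ j * a j) := fun i j => by ring
    simp_rw [h1, Finset.sum_sub_distrib, Finset.sum_add_distrib, ← Finset.sum_div]
    rw [hp1, hp2, hq]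
    ring
  rw [key]
  have habs : ∀ i j : Fin r,
      |μ i * μ j * ((a i * b i + a j * b j)/2 - a i * a j)|
        ≤ μ i * μ j * (δ + ε^2) := by
    intro i j
    rw [abs_mul, abs_mul, abs_of_nonneg (hμ0 i), abs_of_nonneg (hμ0 j), mul_assoc,
      mul_assoc]
    have hpb := pair_bound (a i) (a j) (b i) (b j) ε δ (hab i) (hab j) (ha i) (ha j) (haa i j)
    exact mul_le_mul_of_nonneg_left (mul_le_mul_of_nonneg_left hpb (hμ0 j)) (hμ0 i)
  calc |∑ i, ∑ j, μ i * μ j * ((a i * b i + a j * b j)/2 - a i * a j)|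
      ≤ ∑ i, ∑ j, |μ i * μ j * ((a i * b i + a j * b j)/2 - a i * a j)| := by
        refine (Finset.abs_sum_le_sum_abs _ _).trans ?_
        gcongr with i
        exact Finset.abs_sum_le_sum_abs _ _
    _ ≤ ∑ i, ∑ j, μ i * μ j * (δ + ε^2) := by
        gcongr with i _ j
        exact habs i j
    _ = δ + ε^2 := by
        have h2 : (∑ i, ∑ j, μ i * μ j * (δ + ε^2))
            = ((∑ i, μ i) * (∑ j : Fin r, μ j)) * (δ + ε^2) := by
          rw [Finset.sum_mul_sum, Finset.sum_mul]
          exact Finset.sum_congr rfl fun i _ => (Finset.sum_mul _ _ _).symm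
        rw [h2, hμ1]
        ring

lemma pow_ratio_tendsto_one (x : ℕ → ℝ) (C : ℝ) (hC : 0 ≤ C)
    (h : ∀ᶠ m in atTop, |x m - 1| ≤ C/(m:ℝ)^2) :
    Tendsto (fun m : ℕ => (x m)^m) atTop (nhds 1) := by
  have hlow : Tendsto (fun m : ℕ => 1 - C/(m:ℝ)) atTop (nhds 1) := by
    have h0 := tendsto_const_div_atTop_nhds_zero_nat C
    have : Tendsto (fun m : ℕ => (1:ℝ) - C/(m:ℝ)) atTop (nhds (1 - 0)) :=
      tendsto_const_nhds.sub h0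
    simpa using this
  have hupp : Tendsto (fun m : ℕ => (1 - C/(m:ℝ))⁻¹) atTop (nhds 1) := by
    simpa using hlow.inv₀ (by norm_num)
  have hM : ∀ᶠ m : ℕ in atTop, (2*C + 2 : ℝ) ≤ (m:ℝ) :=
    tendsto_natCast_atTop_atTop.eventually_ge_atTop (2*C+2)
  have hfacts : ∀ᶠ m : ℕ in atTop,
      (1 - C/(m:ℝ) ≤ (x m)^m) ∧ ((x m)^m ≤ (1 - C/(m:ℝ))⁻¹) := by
    filter_upwards [h, hM] with m hm hMm
    have hm0 : (0:ℝ) < m := by linarith [hC]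
    have hm1 : (1:ℝ) ≤ m := by linarith
    set a := C/(m:ℝ)^2 with ha
    have ha0 : 0 ≤ a := by positivity
    have haCm : (m:ℝ) * a = C/(m:ℝ) := by
      rw [ha]; field_simp
    have hCm : C/(m:ℝ) ≤ 1/2 := by
      rw [div_le_iff₀ hm0]; linarith
    have ha12 : a ≤ 1/2 := by
      rw [ha]
      calc C/(m:ℝ)^2 ≤ C/(m:ℝ) := by
            apply div_le_div_of_nonneg_left hC hm0
            nlinarith
        _ ≤ 1/2 := hCm
    have hxl : 1 - a ≤ x m := by linarith [(abs_le.mp hm).1]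
    have hxu : x m ≤ 1 + a := by linarith [(abs_le.mp hm).2]
    have hx0 : 0 ≤ x m := by linarith
    have hber : 1 - C/(m:ℝ) ≤ (1-a)^m := by
      have := one_add_mul_le_pow (show (-2:ℝ) ≤ -a by linarith) m
      calc 1 - C/(m:ℝ) = 1 + (m:ℝ)*(-a) := by rw [mul_neg, haCm]; ring
        _ ≤ (1 + -a)^m := this
        _ = (1-a)^m := by ring_nf
    constructor
    · calc 1 - C/(m:ℝ) ≤ (1-a)^m := hber
        _ ≤ (x m)^m := pow_le_pow_left₀ (by linarith) hxl m
    · have hq2 : (0:ℝ) < 1 - C/(m:ℝ) := by linarith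
      have hpos : (0:ℝ) < (1-a)^m := pow_pos (by linarith) m
      have h2 : (1+a)^m * (1-a)^m = (1-a^2)^m := by
        rw [← mul_pow]; congr 1; ring
      have h3 : (1-a^2)^m ≤ 1 := by
        apply pow_le_one₀ (by nlinarith) (by nlinarith)
      have h4 : (1+a)^m ≤ ((1-a)^m)⁻¹ := by
        rw [inv_eq_one_div, le_div_iff₀ hpos]
        rw [h2]; exact h3
      have h5 : ((1-a)^m)⁻¹ ≤ (1 - C/(m:ℝ))⁻¹ := by
        apply inv_anti₀ hq2 hber
      calc (x m)^m ≤ (1+a)^m := pow_le_pow_left₀ hx0 hxu m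
        _ ≤ ((1-a)^m)⁻¹ := h4
        _ ≤ (1 - C/(m:ℝ))⁻¹ := h5
  exact tendsto_of_tendsto_of_tendsto_of_le_of_le' hlow hupp
    (hfacts.mono fun m hm => hm.1) (hfacts.mono fun m hm => hm.2)
lemma qq_eq2 {r : ℕ} (μ : Fin r → ℝ) (Kf : Fin r → ℕ) (m B : ℕ)
    (hm : B + 1 ≤ m) (hKB : ∀ i, Kf i ≤ B) :
    qq μ Kf (m+4) 2 = ∑ i, μ i * aR ((m-1 : ℕ) : ℝ) ((Kf i : ℕ) : ℝ) := by
  rw [qq]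
  refine Finset.sum_congr rfl fun i _ => ?_
  rw [show m + 4 - 1 - 2 = (m-1) + 2 from by omega, show m + 4 - 1 = (m-1) + 4 from by omega]
  rw [choose_ratio2 (m-1) (Kf i) (by have := hKB i; omega)]
  rfl

lemma qq_eq4 {r : ℕ} (μ : Fin r → ℝ) (Kf : Fin r → ℕ) (m B : ℕ)
    (hm : B + 1 ≤ m) (hKB : ∀ i, Kf i ≤ B) :
    qq μ Kf (m+4) 4 = ∑ i, μ i *
      (aR ((m-1 : ℕ) : ℝ) ((Kf i : ℕ) : ℝ) * bR ((m-1 : ℕ) : ℝ) ((Kf i : ℕ) : ℝ)) := by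
  rw [qq]
  refine Finset.sum_congr rfl fun i _ => ?_
  rw [show m + 4 - 1 - 4 = m - 1 from by omega, show m + 4 - 1 = (m-1) + 4 from by omega]
  rw [choose_ratio4 (m-1) (Kf i) (by have := hKB i; omega)]
lemma ratio_algebra (w P Q : ℝ) (m : ℕ) (hw : w ≠ 0) (hQ : 0 < Q) :
    (w^4 * P^m) / ((w^2 * Q^(m+2))^2) = (P/Q^2)^m * (Q^4)⁻¹ := by
  have e1 : (w^2 * Q^(m+2))^2 = w^4 * ((Q^2)^m * Q^4) := by ring
  rw [e1, mul_div_mul_left _ _ (pow_ne_zero 4 hw), div_mul_eq_div_div,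
    ← div_pow, div_eq_mul_inv]

set_option maxHeartbeats 2000000 in
/-- Proposition 2 of the paper. If `K_{1,n} = 1` and `K_{r,n} = O(1)`,
then `E[χ₁₂ χ₃₄] / (E[χ₁₂])² → 1` as `n → ∞` (here the sequence is indexed by
`n = m + 4` so that the vertices `1, 2, 3, 4` exist). -/
theorem second_moment_ratio
    (r : ℕ) (hr : 2 ≤ r) (μ : Fin r → ℝ)
    (hμ : ∀ i, 0 < μ i) (hsum : ∑ i, μ i = 1)
    (c0 lst : Fin r) (hc0 : (c0 : ℕ) = 0) (hlst : (lst : ℕ) = r - 1)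
    (K : ℕ → Fin r → ℕ)
    (hmono : ∀ n, Monotone (K n))
    (hone : ∀ n i, 1 ≤ K n i)
    (hlt : ∀ n, 2 ≤ n → ∀ i, K n i < n)
    (hK1 : ∀ n, K n c0 = 1)
    (hO : ∃ B : ℕ, ∀ n, K n lst ≤ B) :
    Filter.Tendsto
      (fun m : ℕ =>
        Pr (m + 4) μ (K (m + 4))
            (Uevent c0 (0 : Fin (m + 4)) 1 ∩ Uevent c0 (2 : Fin (m + 4)) 3) /
          (Pr (m + 4) μ (K (m + 4)) (Uevent c0 (0 : Fin (m + 4)) 1)) ^ 2)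
      Filter.atTop (nhds 1) := by
  classical
  obtain ⟨B, hB⟩ := hO
  have hB1 : 1 ≤ B := le_trans (hone 0 lst) (hB 0)
  have hKB : ∀ n i, K n i ≤ B := by
    intro n i
    refine le_trans (hmono n ?_) (hB n)
    rw [Fin.le_def, hlst]
    have := i.isLt
    omega
  set Bv : ℝ := (B : ℝ) with hBv
  have hBv1 : (1:ℝ) ≤ Bv := by rw [hBv]; exact_mod_cast hB1
  have hμ0 : ∀ i, 0 ≤ μ i := fun i => (hμ i).le
  set q : ℕ → ℝ := fun m => qq μ (K (m+4)) (m+4) 2 with hqdef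
  set p : ℕ → ℝ := fun m => qq μ (K (m+4)) (m+4) 4 with hpdef
  set C₀ : ℝ := 4*(46*Bv + 9*Bv^2) with hC₀
  have hC₀0 : 0 ≤ C₀ := by positivity
  -- eventual bounds on q and p
  have hqbound : ∀ᶠ m : ℕ in atTop,
      (1/2 ≤ q m) ∧ (1 - 6*Bv/(m:ℝ) ≤ q m) ∧ (q m ≤ 1) ∧
        (|p m - (q m)^2| ≤ C₀/(m:ℝ)^2) := by
    filter_upwards [eventually_ge_atTop (20*B+20)] with m hm
    have hKm : ∀ i, K (m+4) i ≤ B := hKB (m+4)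
    set t : ℝ := ((m-1 : ℕ) : ℝ) with htdef
    have ht_eq : t = (m:ℝ) - 1 := by
      rw [htdef, Nat.cast_sub (by omega)]
      norm_num
    have hmR : (20:ℝ)*Bv + 20 ≤ (m:ℝ) := by
      have : ((20*B+20 : ℕ) : ℝ) ≤ (m:ℝ) := Nat.cast_le.mpr hm
      push_cast at this
      linarith
    have ht7 : 7*Bv + 7 ≤ t := by rw [ht_eq]; linarith
    have ht0 : (0:ℝ) < t := by linarith
    have hm0 : (0:ℝ) < (m:ℝ) := by linarith
    set a : Fin r → ℝ := fun i => aR t ((K (m+4) i : ℕ) : ℝ) with hadef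
    set b : Fin r → ℝ := fun i => bR t ((K (m+4) i : ℕ) : ℝ) with hbdef
    have hx0 : ∀ i, (0:ℝ) ≤ ((K (m+4) i : ℕ) : ℝ) := fun i => Nat.cast_nonneg _
    have hxB : ∀ i, ((K (m+4) i : ℕ) : ℝ) ≤ Bv := fun i => Nat.cast_le.mpr (hKm i)
    have hqm : q m = ∑ i, μ i * a i := qq_eq2 μ (K (m+4)) m B (by omega) hKm
    have hpm : p m = ∑ i, μ i * (a i * b i) := qq_eq4 μ (K (m+4)) m B (by omega) hKm
    have ha0 : ∀ i, 0 ≤ a i := fun i => aR_nonneg (hx0 i) (hxB i) hBv1 ht7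
    have ha1 : ∀ i, a i ≤ 1 := fun i => aR_le_one (hx0 i) (hxB i) hBv1 ht7
    have halb : ∀ i, 1 - 3*Bv/t ≤ a i := fun i => aR_lb (hx0 i) (hxB i) hBv1 ht7
    have habs : ∀ i, |a i| ≤ 1 := fun i => by
      rw [abs_of_nonneg (ha0 i)]; exact ha1 i
    have hab : ∀ i, |b i - a i| ≤ 46*Bv/t^2 := fun i => by
      obtain ⟨hub, hnn⟩ := sub_bR_le (hx0 i) (hxB i) hBv1 ht7
      rw [abs_sub_comm, abs_of_nonneg hnn]
      exact hub
    have hε0 : (0:ℝ) ≤ 3*Bv/t := by positivity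
    have haa : ∀ i j, |a i - a j| ≤ 3*Bv/t := fun i j => by
      rw [abs_le]
      constructor
      · have := halb i; have := ha1 j; linarith
      · have := halb j; have := ha1 i; linarith
    have hsb : |p m - (q m)^2| ≤ 46*Bv/t^2 + (3*Bv/t)^2 := by
      rw [hpm, hqm]
      exact sum_bound μ a b (3*Bv/t) (46*Bv/t^2) hε0 (by positivity) hμ0 hsum habs hab haa
    have hql : 1 - 3*Bv/t ≤ q m := by
      rw [hqm]
      calc 1 - 3*Bv/t = ∑ i, μ i * (1 - 3*Bv/t) := by
            rw [← Finset.sum_mul, hsum, one_mul]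
        _ ≤ ∑ i, μ i * a i :=
            Finset.sum_le_sum fun i _ => mul_le_mul_of_nonneg_left (halb i) (hμ0 i)
    have hqu : q m ≤ 1 := by
      rw [hqm]
      calc ∑ i, μ i * a i ≤ ∑ i, μ i * 1 :=
            Finset.sum_le_sum fun i _ => mul_le_mul_of_nonneg_left (ha1 i) (hμ0 i)
        _ = 1 := by rw [← Finset.sum_mul, hsum, one_mul]
    have hbt : 3*Bv/t ≤ 6*Bv/(m:ℝ) := by
      rw [div_le_div_iff₀ ht0 hm0]
      nlinarith
    have hmq : 1 - 6*Bv/(m:ℝ) ≤ q m := by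
      have := hql; linarith
    have hhalf : (1:ℝ)/2 ≤ q m := by
      have h6 : 6*Bv/(m:ℝ) ≤ 1/2 := by
        rw [div_le_iff₀ hm0]; linarith
      linarith
    refine ⟨hhalf, hmq, hqu, ?_⟩
    refine hsb.trans ?_
    have ht2 : (m:ℝ) ≤ 2*t := by rw [ht_eq]; linarith
    have hm2 : (m:ℝ)^2 ≤ 4*t^2 := by nlinarith [ht2, hm0.le]
    have key : 46*Bv/t^2 ≤ 4*(46*Bv)/(m:ℝ)^2 := by
      rw [div_le_div_iff₀ (by positivity) (by positivity)]
      nlinarith [mul_le_mul_of_nonneg_left hm2 (by positivity : (0:ℝ) ≤ 46*Bv)]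
    have key2 : (3*Bv/t)^2 ≤ 4*(9*Bv^2)/(m:ℝ)^2 := by
      rw [div_pow, div_le_div_iff₀ (by positivity) (by positivity)]
      nlinarith [mul_le_mul_of_nonneg_left hm2 (by positivity : (0:ℝ) ≤ 9*Bv^2)]
    rw [hC₀]
    calc 46*Bv/t^2 + (3*Bv/t)^2 ≤ 4*(46*Bv)/(m:ℝ)^2 + 4*(9*Bv^2)/(m:ℝ)^2 := by
          linarith
      _ = 4*(46*Bv + 9*Bv^2)/(m:ℝ)^2 := by ring
  -- eventual closed form of the ratio
  have hratio : ∀ᶠ m : ℕ in atTop,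
      Pr (m + 4) μ (K (m + 4))
          (Uevent c0 (0 : Fin (m + 4)) 1 ∩ Uevent c0 (2 : Fin (m + 4)) 3) /
        (Pr (m + 4) μ (K (m + 4)) (Uevent c0 (0 : Fin (m + 4)) 1)) ^ 2
      = (p m/(q m)^2)^m * ((q m)^4)⁻¹ := by
    filter_upwards [hqbound] with m hqb
    obtain ⟨hhalf, -, -, -⟩ := hqb
    have h0 : ((0:Fin (m+4)) : ℕ) = 0 := by
      rw [Fin.coe_ofNat_eq_mod]; exact Nat.mod_eq_of_lt (by omega)
    have h1 : ((1:Fin (m+4)) : ℕ) = 1 := by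
      rw [Fin.coe_ofNat_eq_mod]; exact Nat.mod_eq_of_lt (by omega)
    have h2 : ((2:Fin (m+4)) : ℕ) = 2 := by
      rw [Fin.coe_ofNat_eq_mod]; exact Nat.mod_eq_of_lt (by omega)
    have h3 : ((3:Fin (m+4)) : ℕ) = 3 := by
      rw [Fin.coe_ofNat_eq_mod]; exact Nat.mod_eq_of_lt (by omega)
    have e01 : (0:Fin (m+4)) ≠ 1 := by rw [Fin.ne_iff_vne, h0, h1]; omega
    have e02 : (0:Fin (m+4)) ≠ 2 := by rw [Fin.ne_iff_vne, h0, h2]; omega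
    have e03 : (0:Fin (m+4)) ≠ 3 := by rw [Fin.ne_iff_vne, h0, h3]; omega
    have e12 : (1:Fin (m+4)) ≠ 2 := by rw [Fin.ne_iff_vne, h1, h2]; omega
    have e13 : (1:Fin (m+4)) ≠ 3 := by rw [Fin.ne_iff_vne, h1, h3]; omega
    have e23 : (2:Fin (m+4)) ≠ 3 := by rw [Fin.ne_iff_vne, h2, h3]; omega
    rw [Pr_UU μ (K (m+4)) c0 0 1 2 3 e01 e02 e03 e12 e13 e23 (hK1 (m+4)),
      Pr_U μ (K (m+4)) c0 0 1 e01 (hK1 (m+4))]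
    rw [show m + 4 - 4 = m from by omega, show m + 4 - 2 = m + 2 from by omega]
    have hq0 : q m ≠ 0 := by linarith
    have hw0 : (μ c0 / ((m + 4 - 1 : ℕ) : ℝ)) ≠ 0 := by
      apply div_ne_zero (hμ c0).ne'
      rw [show m + 4 - 1 = m + 3 from by omega]
      positivity
    exact ratio_algebra _ _ _ m hw0 (by linarith)
  -- limits
  have hlow : Tendsto (fun m : ℕ => 1 - 6*Bv/(m:ℝ)) atTop (nhds 1) := by
    have h0 := tendsto_const_div_atTop_nhds_zero_nat (6*Bv)
    have : Tendsto (fun m : ℕ => (1:ℝ) - 6*Bv/(m:ℝ)) atTop (nhds (1 - 0)) :=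
      tendsto_const_nhds.sub h0
    simpa using this
  have T2 : Tendsto q atTop (nhds 1) := by
    refine tendsto_of_tendsto_of_tendsto_of_le_of_le' hlow tendsto_const_nhds
      (hqbound.mono fun m hm => hm.2.1) (hqbound.mono fun m hm => hm.2.2.1)
  have T3 : Tendsto (fun m => ((q m)^4)⁻¹) atTop (nhds 1) := by
    have := (T2.pow 4).inv₀ (by norm_num)
    simpa using this
  have hx : ∀ᶠ m : ℕ in atTop, |p m/(q m)^2 - 1| ≤ (4*C₀)/(m:ℝ)^2 := by
    filter_upwards [hqbound, eventually_ge_atTop 1] with m hqb hm1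
    obtain ⟨hhalf, -, -, hpq⟩ := hqb
    have hq2 : (0:ℝ) < (q m)^2 := by positivity
    have hm0 : (0:ℝ) < (m:ℝ) := by exact_mod_cast Nat.pos_of_ne_zero (by omega)
    have heq : p m/(q m)^2 - 1 = (p m - (q m)^2)/(q m)^2 := by
      field_simp
    rw [heq, abs_div, abs_of_pos hq2, div_le_iff₀ hq2]
    have hq14 : (1:ℝ)/4 ≤ (q m)^2 := by nlinarith
    calc |p m - (q m)^2| ≤ C₀/(m:ℝ)^2 := hpq
      _ ≤ 4*C₀/(m:ℝ)^2 * (q m)^2 := by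
          rw [div_mul_eq_mul_div, div_le_div_iff₀ (by positivity) (by positivity)]
          have hstep : C₀ ≤ 4*C₀*(q m)^2 := by nlinarith [mul_le_mul_of_nonneg_left hq14 hC₀0]
          nlinarith [mul_le_mul_of_nonneg_right hstep (sq_nonneg (m:ℝ))]
  have T1 : Tendsto (fun m : ℕ => (p m/(q m)^2)^m) atTop (nhds 1) :=
    pow_ratio_tendsto_one _ (4*C₀) (by positivity) hx
  have Tfin : Tendsto (fun m : ℕ => (p m/(q m)^2)^m * ((q m)^4)⁻¹) atTop (nhds 1) := by
    have := T1.mul T3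
    simpa using this
  have hEq : (fun m : ℕ => (p m/(q m)^2)^m * ((q m)^4)⁻¹) =ᶠ[atTop]
      (fun m : ℕ =>
        Pr (m + 4) μ (K (m + 4))
            (Uevent c0 (0 : Fin (m + 4)) 1 ∩ Uevent c0 (2 : Fin (m + 4)) 3) /
          (Pr (m + 4) μ (K (m + 4)) (Uevent c0 (0 : Fin (m + 4)) 1)) ^ 2) := by
    filter_upwards [hratio] with m hm
    exact hm.symm
  exact Tfin.congr' hEq
end
end

section
/- In the inhomogeneous random K-out graph H(n; μ, K) with r ≥ 2, 1 ≤ K_1 ≤ … ≤ K_r < n, and μ̃ = Σ_{i=1}^{r−1} μ_i = 1 − μ_r, for each ℓ with 2 ≤ ℓ ≤ ⌊n/2⌋ one has P[B_{n,ℓ}] ≤ ( μ̃·(ℓ−1)/(n−1) + (1−μ̃)·((ℓ−1)/(n−1))^{K_r} )^ℓ · ( μ̃·(n−ℓ−1)/(n−1) + (1−μ̃)·((n−ℓ−1)/(n−1))^{K_r} )^{n−ℓ}. -/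
open Finset Filter

noncomputable section

lemma descFactorial_mul_pow_le (a b k : ℕ) (hab : a ≤ b) :
    a.descFactorial k * b ^ k ≤ b.descFactorial k * a ^ k := by
  induction k with
  | zero => simp
  | succ k ih =>
    rw [Nat.descFactorial_succ, Nat.descFactorial_succ, pow_succ, pow_succ]
    have h1 : (a - k) * b ≤ (b - k) * a := by
      rw [Nat.sub_mul, Nat.sub_mul, mul_comm b a]
      exact Nat.sub_le_sub_left (Nat.mul_le_mul_left k hab) (a * b)
    calc (a - k) * a.descFactorial k * (b ^ k * b)
        = ((a - k) * b) * (a.descFactorial k * b ^ k) := by ring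
      _ ≤ ((b - k) * a) * (b.descFactorial k * a ^ k) := Nat.mul_le_mul h1 ih
      _ = (b - k) * b.descFactorial k * (a ^ k * a) := by ring

lemma choose_mul_pow_le_s14 (a b k : ℕ) (hab : a ≤ b) :
    a.choose k * b ^ k ≤ b.choose k * a ^ k := by
  have h := descFactorial_mul_pow_le a b k hab
  rw [Nat.descFactorial_eq_factorial_mul_choose, Nat.descFactorial_eq_factorial_mul_choose,
    mul_assoc, mul_assoc] at h
  exact Nat.le_of_mul_le_mul_left h k.factorial_pos

lemma choose_ratio_le_s14 (a b k : ℕ) (hab : a ≤ b) (hkb : k ≤ b) (hb : 0 < b) :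
    (a.choose k : ℝ) / (b.choose k : ℝ) ≤ ((a : ℝ) / b) ^ k := by
  have hbc : (0:ℝ) < (b.choose k : ℝ) := by exact_mod_cast Nat.choose_pos hkb
  have hbk : (0:ℝ) < (b:ℝ) ^ k := by positivity
  rw [div_pow, div_le_div_iff₀ hbc hbk]
  rw [mul_comm ((a:ℝ)^k)]; exact_mod_cast choose_mul_pow_le_s14 a b k hab

/-- eq. (19) of the paper. For `2 ≤ ℓ ≤ ⌊n/2⌋`,
`P[B_{n,ℓ}] ≤ (μ̃(ℓ−1)/(n−1) + (1−μ̃)((ℓ−1)/(n−1))^{K_r})^ℓ ·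
(μ̃(n−ℓ−1)/(n−1) + (1−μ̃)((n−ℓ−1)/(n−1))^{K_r})^{n−ℓ}`. -/
theorem prob_B_n_ell_upper
    (r : ℕ) (hr : 2 ≤ r) (μ : Fin r → ℝ)
    (hμ : ∀ i, 0 < μ i) (hsum : ∑ i, μ i = 1)
    (lst : Fin r) (hlst : (lst : ℕ) = r - 1)
    (μt : ℝ) (hμt : μt = ∑ i ∈ Finset.univ.erase lst, μ i)
    (n : ℕ) (hn : 2 ≤ n)
    (K : Fin r → ℕ) (hmono : Monotone K) (hone : ∀ i, 1 ≤ K i) (hlt : ∀ i, K i < n)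
    (l : ℕ) (hl2 : 2 ≤ l) (hl : l ≤ n / 2) :
    Pr n μ K (Bevent n r l) ≤
      (μt * ((l : ℝ) - 1) / ((n : ℝ) - 1) +
          (1 - μt) * (((l : ℝ) - 1) / ((n : ℝ) - 1)) ^ (K lst)) ^ l *
        (μt * ((n : ℝ) - (l : ℝ) - 1) / ((n : ℝ) - 1) +
          (1 - μt) * (((n : ℝ) - (l : ℝ) - 1) / ((n : ℝ) - 1)) ^ (K lst)) ^ (n - l) := by
  classical
  have hln : l < n := by omega
  have hn4 : 4 ≤ n := by omega
  have hnl2 : 2 ≤ n - l := by omega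
  set S : Finset (Fin n) := univ.filter (fun v => (v : ℕ) < l) with hS
  have hmemS : ∀ u : Fin n, u ∈ S ↔ (u : ℕ) < l := by
    intro u; simp [hS]
  set side : Fin n → Finset (Fin n) := fun v => if (v : ℕ) < l then S else Sᶜ with hside
  have hmem : ∀ ω : Config n r, ω ∈ Bevent n r l ↔ ∀ v, (ω v).2 ⊆ side v := by
    intro ω
    constructor
    · intro h v u hu
      by_cases hv : (v : ℕ) < l
      · simp only [hside, if_pos hv]
        rw [hmemS]
        by_contra hu'
        exact (h v u hv hu').2 hu
      · simp only [hside, if_neg hv, Finset.mem_compl, hmemS]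
        intro hu'
        exact (h u v hu' hv).1 hu
    · intro h u v hu hv
      constructor
      · intro hmem'
        have h2 := h v hmem'
        simp only [hside, if_neg hv, Finset.mem_compl, hmemS] at h2
        exact h2 hu
      · intro hmem'
        have h2 := h u hmem'
        simp only [hside, if_pos hu, hmemS] at h2
        exact hv h2
  set G : Fin n → Fin r × Finset (Fin n) → ℝ := fun v p =>
    if p.2 ⊆ side v ∧ p.2.card = K p.1 ∧ v ∉ p.2 then
      μ p.1 / ((n - 1).choose (K p.1) : ℝ) else 0 with hG
  have hPr : Pr n μ K (Bevent n r l) = ∏ v : Fin n, ∑ p : Fin r × Finset (Fin n), G v p := by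
    rw [Pr]
    have hind : ∀ ω : Config n r,
        (Bevent n r l).indicator (wt n μ K) ω = ∏ v, G v (ω v) := by
      intro ω
      by_cases hω : ω ∈ Bevent n r l
      · rw [Set.indicator_of_mem hω, wt]
        refine Finset.prod_congr rfl fun v _ => ?_
        have hv := (hmem ω).1 hω v
        simp [hG, hv]
      · rw [Set.indicator_of_notMem hω]
        obtain ⟨v, hv⟩ := not_forall.1 (fun h => hω ((hmem ω).2 h))
        exact (Finset.prod_eq_zero (mem_univ v) (by simp [hG, hv])).symm
    simp_rw [hind]
    rw [← Fintype.piFinset_univ]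
    exact (Finset.prod_univ_sum _ _).symm
  have hvin : ∀ v : Fin n, v ∈ side v := by
    intro v
    by_cases hv : (v : ℕ) < l
    · simp [hside, if_pos hv, hmemS, hv]
    · simp [hside, if_neg hv, Finset.mem_compl, hmemS, hv]
  have hSl : S.card = l := by
    have hEq : S = Finset.Iio (⟨l, hln⟩ : Fin n) := by
      ext v; simp [hS, Finset.mem_Iio, Fin.lt_def]
    rw [hEq, Fin.card_Iio]
  have hsidecard : ∀ v : Fin n, (side v).card = if (v : ℕ) < l then l else n - l := by
    intro v
    by_cases hv : (v : ℕ) < l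
    · simp [hside, if_pos hv, hSl]
    · simp [hside, if_neg hv, Finset.card_compl, hSl]
  have hsumv : ∀ v : Fin n, ∑ p : Fin r × Finset (Fin n), G v p
      = ∑ c : Fin r, μ c * ((((side v).card - 1).choose (K c) : ℝ)
          / (((n - 1).choose (K c) : ℝ))) := by
    intro v
    rw [Fintype.sum_prod_type]
    refine Finset.sum_congr rfl fun c _ => ?_
    have hveq : ∀ A : Finset (Fin n),
        (A ⊆ side v ∧ A.card = K c ∧ v ∉ A) ↔ A ∈ ((side v).erase v).powersetCard (K c) := by
      intro A
      simp only [Finset.mem_powersetCard, Finset.subset_erase]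
      tauto
    calc ∑ A : Finset (Fin n), G v (c, A)
        = ∑ A ∈ univ.filter (fun A : Finset (Fin n) =>
            A ∈ ((side v).erase v).powersetCard (K c)), μ c / ((n - 1).choose (K c) : ℝ) := by
          rw [Finset.sum_filter]
          refine Finset.sum_congr rfl fun A _ => ?_
          simp only [hG]
          rw [if_congr (hveq A) rfl rfl]
      _ = ((((side v).erase v).powersetCard (K c)).card : ℝ)
            * (μ c / ((n - 1).choose (K c) : ℝ)) := by
          rw [Finset.filter_univ_mem, Finset.sum_const, nsmul_eq_mul]
      _ = μ c * ((((side v).card - 1).choose (K c) : ℝ) / (((n - 1).choose (K c) : ℝ))) := by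
          rw [Finset.card_powersetCard, Finset.card_erase_of_mem (hvin v)]
          ring
  have hbound : ∀ m : ℕ, 2 ≤ m → m ≤ n →
      ∑ c : Fin r, μ c * (((m - 1).choose (K c) : ℝ) / (((n - 1).choose (K c) : ℝ)))
        ≤ μt * (((m : ℝ) - 1) / ((n : ℝ) - 1))
          + (1 - μt) * (((m : ℝ) - 1) / ((n : ℝ) - 1)) ^ (K lst) := by
    intro m hm2 hmn
    set x : ℝ := ((m : ℝ) - 1) / ((n : ℝ) - 1) with hx
    have hnR : (1 : ℝ) ≤ (n : ℝ) - 1 := by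
      have : (2 : ℝ) ≤ (n : ℝ) := by exact_mod_cast hn
      linarith
    have hmR : (1 : ℝ) ≤ (m : ℝ) := by exact_mod_cast (by omega : 1 ≤ m)
    have hmnR : (m : ℝ) ≤ (n : ℝ) := by exact_mod_cast hmn
    have hx0 : 0 ≤ x := by
      apply div_nonneg <;> linarith
    have hx1 : x ≤ 1 := by
      rw [div_le_one (by linarith)]; linarith
    have hm1 : ((m - 1 : ℕ) : ℝ) = (m : ℝ) - 1 := by
      rw [Nat.cast_sub (by omega)]; norm_num
    have hn1 : ((n - 1 : ℕ) : ℝ) = (n : ℝ) - 1 := by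
      rw [Nat.cast_sub (by omega)]; norm_num
    have hratio : ∀ c : Fin r,
        (((m - 1).choose (K c) : ℝ) / (((n - 1).choose (K c) : ℝ))) ≤ x ^ (K c) := by
      intro c
      have h := choose_ratio_le_s14 (m - 1) (n - 1) (K c) (by omega)
        (by have := hlt c; omega) (by omega)
      rwa [hm1, hn1] at h
    have hratio0 : ∀ c : Fin r,
        0 ≤ (((m - 1).choose (K c) : ℝ) / (((n - 1).choose (K c) : ℝ))) := by
      intro c; positivity
    have hμlst : μ lst = 1 - μt := by
      have h := Finset.sum_erase_add univ μ (mem_univ lst)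
      rw [hsum] at h
      rw [hμt]; linarith
    rw [← Finset.sum_erase_add univ _ (mem_univ lst)]
    have h1 : ∑ c ∈ univ.erase lst,
        μ c * (((m - 1).choose (K c) : ℝ) / (((n - 1).choose (K c) : ℝ))) ≤ μt * x := by
      rw [hμt, Finset.sum_mul]
      refine Finset.sum_le_sum fun c _ => ?_
      have hle : (((m - 1).choose (K c) : ℝ) / (((n - 1).choose (K c) : ℝ))) ≤ x :=
        le_trans (hratio c) (pow_le_of_le_one hx0 hx1 (by have := hone c; omega))
      exact mul_le_mul_of_nonneg_left hle (hμ c).le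
    have h2 : μ lst * (((m - 1).choose (K lst) : ℝ) / (((n - 1).choose (K lst) : ℝ)))
        ≤ (1 - μt) * x ^ (K lst) := by
      rw [hμlst]
      refine mul_le_mul_of_nonneg_left (hratio lst) ?_
      rw [← hμlst]; exact (hμ lst).le
    exact add_le_add h1 h2
  set P1 : ℝ := μt * (((l : ℝ) - 1) / ((n : ℝ) - 1))
      + (1 - μt) * (((l : ℝ) - 1) / ((n : ℝ) - 1)) ^ (K lst) with hP1
  set P2 : ℝ := μt * (((n : ℝ) - (l : ℝ) - 1) / ((n : ℝ) - 1))
      + (1 - μt) * (((n : ℝ) - (l : ℝ) - 1) / ((n : ℝ) - 1)) ^ (K lst) with hP2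
  have hnl1 : ((n - l : ℕ) : ℝ) = (n : ℝ) - (l : ℝ) := by
    rw [Nat.cast_sub (by omega)]
  have hvle : ∀ v : Fin n, ∑ p : Fin r × Finset (Fin n), G v p
      ≤ if (v : ℕ) < l then P1 else P2 := by
    intro v
    rw [hsumv v, hsidecard v]
    by_cases hv : (v : ℕ) < l
    · rw [if_pos hv, if_pos hv, hP1]
      exact hbound l hl2 (by omega)
    · rw [if_neg hv, if_neg hv, hP2]
      have h := hbound (n - l) hnl2 (by omega)
      rwa [hnl1] at h
  have hv0 : ∀ v : Fin n, 0 ≤ ∑ p : Fin r × Finset (Fin n), G v p := by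
    intro v
    refine Finset.sum_nonneg fun p _ => ?_
    simp only [hG]
    split
    · exact div_nonneg (hμ _).le (Nat.cast_nonneg _)
    · exact le_rfl
  rw [hPr]
  have hfilterl : (univ.filter (fun v : Fin n => (v : ℕ) < l)).card = l := hSl
  have hfilternl : (univ.filter (fun v : Fin n => ¬ (v : ℕ) < l)).card = n - l := by
    rw [Finset.filter_not, Finset.card_sdiff_of_subset (Finset.filter_subset _ _), Finset.card_univ,
      Fintype.card_fin, hfilterl]
  calc ∏ v : Fin n, ∑ p : Fin r × Finset (Fin n), G v p
      ≤ ∏ v : Fin n, (if (v : ℕ) < l then P1 else P2) :=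
        Finset.prod_le_prod (fun v _ => hv0 v) (fun v _ => hvle v)
    _ = P1 ^ l * P2 ^ (n - l) := by
        rw [Finset.prod_ite, Finset.prod_const, Finset.prod_const, hfilterl, hfilternl]
    _ = _ := by
        rw [hP1, hP2]
        rw [mul_div_assoc, mul_div_assoc]
end
end
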